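/- arXiv:2307.11919 — 8 statements merged into one kernel-verified Lean document; each statement's English description precedes it below -/
import Mathlib

section
/- Let U : ℝ → ℝ be concave, nondecreasing, non-constant and continuously differentiable, and assume lim_{x→+∞} U(x) > 0 (equivalently, since U is nondecreasing, U(x₀) > 0 for some x₀ ∈ ℝ). Then AE₊(U) ≤ 1 and AE₋(U) ≥ 1, i.e. limsup_{x→+∞} x·U'(x)/U(x) ≤ 1 and liminf_{x→−∞} x·U'(x)/U(x) ≥ 1, the limsup and liminf being taken in EReal. -/
open Filter Set

/-- Asymptotic elasticity at `+∞`: `limsup_{x→+∞} x·U'(x)/U(x)`, taken in `EReal`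
(the real ratio uses the convention that division by `0` gives `0`). -/
noncomputable def AEplus (U : ℝ → ℝ) : EReal :=
  Filter.limsup (fun x : ℝ => ((x * deriv U x / U x : ℝ) : EReal)) Filter.atTop

/-- Asymptotic elasticity at `-∞`: `liminf_{x→−∞} x·U'(x)/U(x)`, taken in `EReal`. -/
noncomputable def AEminus (U : ℝ → ℝ) : EReal :=
  Filter.liminf (fun x : ℝ => ((x * deriv U x / U x : ℝ) : EReal)) Filter.atBot

/-- If `U : ℝ → ℝ` is concave, nondecreasing, non-constant and
continuously differentiable with `lim_{x→+∞} U x > 0` (equivalently `U x₀ > 0` for some `x₀`),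
then `AE₊(U) ≤ 1` and `AE₋(U) ≥ 1`. -/
theorem AE_bounds (U : ℝ → ℝ) (hconc : ConcaveOn ℝ Set.univ U) (hmono : Monotone U)
    (hnonconst : ∃ a b : ℝ, U a ≠ U b) (hC1 : ContDiff ℝ 1 U)
    (hpos : ∃ x₀ : ℝ, 0 < U x₀) :
    AEplus U ≤ 1 ∧ 1 ≤ AEminus U := by
  obtain ⟨c, hc⟩ := hpos
  have hd : Differentiable ℝ U := hC1.differentiable one_ne_zero
  constructor
  · -- AE₊ ≤ 1
    have hev : ∀ᶠ x in atTop,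
        ((x * deriv U x / U x : ℝ) : EReal) ≤ ((x / (x - c) : ℝ) : EReal) := by
      filter_upwards [eventually_gt_atTop (max c 0)] with x hx
      have hxc : c < x := lt_of_le_of_lt (le_max_left _ _) hx
      have hx0 : (0 : ℝ) < x := lt_of_le_of_lt (le_max_right _ _) hx
      have hUx : 0 < U x := lt_of_lt_of_le hc (hmono hxc.le)
      have hxc' : (0 : ℝ) < x - c := sub_pos.mpr hxc
      have hslope : deriv U x ≤ (U x - U c) / (x - c) := by
        have h := hconc.deriv_le_slope (mem_univ c) (mem_univ x) hxc (hd x)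
        rwa [slope_def_field] at h
      have key : deriv U x * (x - c) ≤ U x - U c := (le_div_iff₀ hxc').mp hslope
      rw [EReal.coe_le_coe_iff, div_le_div_iff₀ hUx hxc']
      nlinarith [mul_le_mul_of_nonneg_left key hx0.le, mul_pos hx0 hc]
    have hreal : Tendsto (fun x : ℝ => x / (x - c)) atTop (nhds 1) := by
      have h0 : Tendsto (fun x : ℝ => c / (x - c)) atTop (nhds 0) :=
        tendsto_const_nhds.div_atTop (tendsto_atTop_add_const_right _ (-c) tendsto_id)
      have h1 : Tendsto (fun x : ℝ => 1 + c / (x - c)) atTop (nhds 1) := by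
        simpa using tendsto_const_nhds.add h0
      refine h1.congr' ?_
      filter_upwards [eventually_gt_atTop c] with x hx
      have : x - c ≠ 0 := sub_ne_zero.mpr hx.ne'
      field_simp
      ring
    have hg : Tendsto (fun x : ℝ => ((x / (x - c) : ℝ) : EReal)) atTop (nhds 1) := by
      have := (continuous_coe_real_ereal.tendsto (1 : ℝ)).comp hreal
      exact this
    calc AEplus U ≤ limsup (fun x : ℝ => ((x / (x - c) : ℝ) : EReal)) atTop :=
          limsup_le_limsup hev
      _ = 1 := hg.limsup_eq
  · -- AE₋ ≥ 1
    -- pick p < q with U p < U q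
    obtain ⟨a, b, hab⟩ := hnonconst
    have hne : a ≠ b := fun h => hab (by rw [h])
    obtain ⟨p, q, hpq, hUpq⟩ : ∃ p q : ℝ, p < q ∧ U p < U q := by
      rcases hne.lt_or_gt with h | h
      · exact ⟨a, b, h, (hmono h.le).lt_of_ne hab⟩
      · exact ⟨b, a, h, (hmono h.le).lt_of_ne (Ne.symm hab)⟩
    -- MVT: a point ξ with positive derivative
    obtain ⟨ξ, hξ, hξd⟩ := exists_hasDerivAt_eq_slope U (deriv U) hpq
      hd.continuous.continuousOn (fun x _ => (hd x).hasDerivAt)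
    have hδ : 0 < deriv U ξ := by
      rw [hξd]
      exact div_pos (sub_pos.mpr hUpq) (sub_pos.mpr hpq)
    set δ := deriv U ξ with hδdef
    -- U tends to -∞ at -∞
    have hUbot : Tendsto U atBot atBot := by
      apply tendsto_atBot_mono' atBot
        (show ∀ᶠ x in atBot, U x ≤ U ξ - δ * ξ + δ * x from ?_) ?_
      · filter_upwards [eventually_lt_atBot ξ] with x hx
        have hslope : δ ≤ (U ξ - U x) / (ξ - x) := by
          have h := hconc.deriv_le_slope (mem_univ x) (mem_univ ξ) hx (hd ξ)
          rwa [slope_def_field] at h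
        have h2 : δ * (ξ - x) ≤ U ξ - U x := (le_div_iff₀ (sub_pos.mpr hx)).mp hslope
        nlinarith
      · have : Tendsto (fun x : ℝ => δ * x) atBot atBot :=
          Tendsto.const_mul_atBot hδ tendsto_id
        exact tendsto_atBot_add_const_left _ _ this
    have hUneg : ∀ᶠ x in atBot, U x < 0 := hUbot.eventually (eventually_lt_atBot 0)
    have hev : ∀ᶠ x in atBot,
        (((x / (x - c)) * (1 - U c / U x) : ℝ) : EReal) ≤
          ((x * deriv U x / U x : ℝ) : EReal) := by
      filter_upwards [eventually_lt_atBot (min c 0), hUneg] with x hx hU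
      have hxc : x < c := lt_of_lt_of_le hx (min_le_left _ _)
      have hx0 : x < 0 := lt_of_lt_of_le hx (min_le_right _ _)
      have hxc' : (0 : ℝ) < c - x := sub_pos.mpr hxc
      have hxcne : x - c ≠ 0 := sub_ne_zero.mpr hxc.ne
      have hUne : U x ≠ 0 := hU.ne
      have hslope : (U c - U x) / (c - x) ≤ deriv U x := by
        have h := hconc.slope_le_deriv (mem_univ x) (mem_univ c) hxc (hd x)
        rwa [slope_def_field] at h
      have key : U c - U x ≤ deriv U x * (c - x) := (div_le_iff₀ hxc').mp hslope
      have key2 : deriv U x * (x - c) ≤ U x - U c := by nlinarith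
      rw [EReal.coe_le_coe_iff]
      have hfact : x * deriv U x / U x - (x / (x - c)) * (1 - U c / U x) =
          (x / ((x - c) * U x)) * (deriv U x * (x - c) - (U x - U c)) := by
        field_simp
      have hdenpos : 0 < (x - c) * U x :=
        mul_pos_of_neg_of_neg (sub_neg.mpr hxc) hU
      have hnonneg : 0 ≤ (x / ((x - c) * U x)) * (deriv U x * (x - c) - (U x - U c)) :=
        by nlinarith [div_nonpos_of_nonpos_of_nonneg hx0.le hdenpos.le,
          sub_nonpos.mpr key2]
      linarith [hfact ▸ hnonneg]
    have hreal : Tendsto (fun x : ℝ => (x / (x - c)) * (1 - U c / U x)) atBot (nhds 1) := by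
      have hxc : Tendsto (fun x : ℝ => x / (x - c)) atBot (nhds 1) := by
        have haux : Tendsto (fun x : ℝ => c - x) atBot atTop := by
          exact (tendsto_atTop_add_const_left atBot c tendsto_neg_atBot_atTop).congr fun x => (sub_eq_add_neg c x).symm
        have h0 : Tendsto (fun x : ℝ => (-c) / (c - x)) atBot (nhds 0) :=
          tendsto_const_nhds.div_atTop haux
        have h0' : Tendsto (fun x : ℝ => c / (x - c)) atBot (nhds 0) := by
          refine h0.congr fun x => ?_
          rw [show c - x = -(x - c) by ring, div_neg, neg_div, neg_neg]
        have h1 : Tendsto (fun x : ℝ => 1 + c / (x - c)) atBot (nhds 1) := by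
          simpa using tendsto_const_nhds.add h0'
        refine h1.congr' ?_
        filter_upwards [eventually_lt_atBot c] with x hx
        have : x - c ≠ 0 := sub_ne_zero.mpr hx.ne
        field_simp
        ring
      have hUf : Tendsto (fun x : ℝ => U c / U x) atBot (nhds 0) := by
        have haux : Tendsto (fun x : ℝ => -U x) atBot atTop :=
          tendsto_neg_atBot_atTop.comp hUbot
        have h0 : Tendsto (fun x : ℝ => (-U c) / (-U x)) atBot (nhds 0) :=
          tendsto_const_nhds.div_atTop haux
        refine h0.congr fun x => ?_
        rw [neg_div_neg_eq]
      have h2 : Tendsto (fun x : ℝ => 1 - U c / U x) atBot (nhds 1) := by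
        simpa using tendsto_const_nhds.sub hUf
      simpa using hxc.mul h2
    have hg : Tendsto (fun x : ℝ => (((x / (x - c)) * (1 - U c / U x) : ℝ) : EReal))
        atBot (nhds 1) := by
      have := (continuous_coe_real_ereal.tendsto (1 : ℝ)).comp hreal
      exact this
    calc (1 : EReal)
        = liminf (fun x : ℝ => (((x / (x - c)) * (1 - U c / U x) : ℝ) : EReal)) atBot :=
          hg.liminf_eq.symm
      _ ≤ AEminus U := liminf_le_liminf hev
end

section
/- Let U : ℝ → ℝ be concave, nondecreasing, non-constant and continuously differentiable. Let γ > 1 and let x̄ < 0 be such that U(x̄) < 0 and x·U'(x)/U(x) > γ for every x ≤ x̄. Then for every x ≤ x̄ and every real λ ≥ 1 one has U(λ·x) ≤ λ^γ · U(x), with strict inequality whenever λ > 1. -/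
open Set

/-- Let `U : ℝ → ℝ` be concave, nondecreasing, non-constant and continuously
differentiable, `γ > 1`, and `x̄ < 0` with `U x̄ < 0` and `x·U'(x)/U(x) > γ` for all `x ≤ x̄`.
Then `U (λ·x) ≤ λ^γ · U x` for all `x ≤ x̄` and real `λ ≥ 1`, with strict inequality
whenever `λ > 1`. -/
theorem growth_below_threshold (U : ℝ → ℝ) (hconc : ConcaveOn ℝ Set.univ U)
    (hmono : Monotone U) (hnonconst : ∃ a b : ℝ, U a ≠ U b) (hC1 : ContDiff ℝ 1 U)
    (γ : ℝ) (hγ : 1 < γ) (xbar : ℝ) (hxbar : xbar < 0) (hUxbar : U xbar < 0)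
    (hratio : ∀ x ≤ xbar, γ < x * deriv U x / U x) :
    ∀ x ≤ xbar, ∀ lam : ℝ, 1 ≤ lam →
      U (lam * x) ≤ lam ^ γ * U x ∧ (1 < lam → U (lam * x) < lam ^ γ * U x) := by
  intro x hx lam hlam
  have hx0 : x < 0 := lt_of_le_of_lt hx hxbar
  have hUdiff : Differentiable ℝ U := hC1.differentiable one_ne_zero
  have hUneg : ∀ y ≤ xbar, U y < 0 := fun y hy => lt_of_le_of_lt (hmono hy) hUxbar
  set h : ℝ → ℝ := fun l => l ^ (-γ) * U (l * x) with hh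
  have hderiv : ∀ l : ℝ, 0 < l → HasDerivAt h
      (-γ * l ^ (-γ - 1) * U (l * x) + l ^ (-γ) * (deriv U (l * x) * x)) l := by
    intro l hl
    have h1 : HasDerivAt (fun t : ℝ => t ^ (-γ)) (-γ * l ^ (-γ - 1)) l := by
      simpa using Real.hasDerivAt_rpow_const (x := l) (p := -γ) (Or.inl hl.ne')
    have h2 : HasDerivAt (fun t : ℝ => U (t * x)) (deriv U (l * x) * x) l :=
      (hUdiff (l * x)).hasDerivAt.comp l (hasDerivAt_mul_const x)
    exact h1.mul h2
  have hkey : ∀ l : ℝ, 1 ≤ l → deriv h l < 0 := by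
    intro l hl
    have hl0 : (0:ℝ) < l := lt_of_lt_of_le one_pos hl
    have hy : l * x ≤ xbar := by nlinarith
    have hUy : U (l * x) < 0 := hUneg _ hy
    have hlt : l * x * deriv U (l * x) < γ * U (l * x) :=
      (lt_div_iff_of_neg hUy).mp (hratio (l * x) hy)
    have hp : (0:ℝ) < l ^ (-γ - 1) := Real.rpow_pos_of_pos hl0 _
    have hq : l ^ (-γ) = l ^ (-γ - 1) * l := by
      rw [← Real.rpow_add_one hl0.ne']; ring_nf
    rw [(hderiv l hl0).deriv, hq]
    have hpos : 0 < l ^ (-γ - 1) * (γ * U (l * x) - l * x * deriv U (l * x)) :=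
      mul_pos hp (sub_pos.mpr hlt)
    nlinarith [hpos]
  have hcont : ContinuousOn h (Ici 1) := by
    intro l hl
    have hl0 : (0:ℝ) < l := lt_of_lt_of_le one_pos hl
    exact ((Real.continuousAt_rpow_const l (-γ) (Or.inl hl0.ne')).mul
      ((hC1.continuous.comp (continuous_mul_right x)).continuousAt)).continuousWithinAt
  have hanti : StrictAntiOn h (Ici 1) :=
    strictAntiOn_of_deriv_neg (convex_Ici 1) hcont
      (fun l hl => hkey l (le_of_lt (by simpa [interior_Ici] using hl)))
  have hlam0 : (0:ℝ) < lam := lt_of_lt_of_le one_pos hlam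
  have hpow : (0:ℝ) < lam ^ γ := Real.rpow_pos_of_pos hlam0 _
  have hh1 : h 1 = U x := by simp [hh]
  have hcancel : lam ^ γ * lam ^ (-γ) = 1 := by
    rw [← Real.rpow_add hlam0]; simp
  have hexpand : U (lam * x) = lam ^ γ * h lam := by
    simp only [hh]; rw [← mul_assoc, hcancel, one_mul]
  constructor
  · have hle : h lam ≤ h 1 := by
      rcases hlam.eq_or_lt with rfl | hlt
      · exact le_refl _
      · exact (hanti (mem_Ici.mpr le_rfl) (mem_Ici.mpr hlam) hlt).le
    rw [hexpand, ← hh1]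
    exact mul_le_mul_of_nonneg_left hle hpow.le
  · intro hlt
    have hltv : h lam < h 1 := hanti (mem_Ici.mpr le_rfl) (mem_Ici.mpr hlam) hlt
    rw [hexpand, ← hh1]
    exact mul_lt_mul_of_pos_left hltv hpow
end

section
/- Let U : ℝ → ℝ be concave, nondecreasing, non-constant and continuously differentiable, assume AE₋(U) > 1, and let γ be a real number with 1 < γ and (γ : EReal) < AE₋(U). Then there exists x̄ < 0 such that U(x̄) < 0 and x·U'(x)/U(x) > γ for every x ≤ x̄; moreover, for any such x̄, setting C := U(0)⁺ + U(0)⁻ + U(x̄)⁻ (so C > 0), one has U(λ·x) ≤ λ^γ · (U(x) + C) for every real λ ≥ 1 and every x ∈ ℝ. -/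
open Filter Set

lemma mono_hasDerivAt_nonneg {f : ℝ → ℝ} (hf : Monotone f) {d x : ℝ}
    (h : HasDerivAt f d x) : 0 ≤ d := by
  have h1 : Tendsto (slope f x) (nhdsWithin x (Set.Ioi x)) (nhds d) :=
    (hasDerivAt_iff_tendsto_slope.mp h).mono_left
      (nhdsWithin_mono _ (fun y hy => ne_of_gt hy))
  refine ge_of_tendsto h1 ?_
  filter_upwards [self_mem_nhdsWithin] with y hy
  have : (0:ℝ) ≤ (f y - f x) / (y - x) :=
    div_nonneg (sub_nonneg.2 (hf (le_of_lt hy))) (sub_nonneg.2 (le_of_lt hy))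
  simpa [slope_def_field, div_eq_mul_inv] using this

/-- Key growth estimate for `x ≤ xbar`. -/
lemma key_growth {U : ℝ → ℝ} (hmono : Monotone U) (hC1 : ContDiff ℝ 1 U)
    {γ xbar : ℝ} (hγ1 : 1 < γ) (hxbar : xbar < 0) (hUxbar : U xbar < 0)
    (hrat : ∀ x ≤ xbar, γ < x * deriv U x / U x)
    {x : ℝ} (hx : x ≤ xbar) {lam : ℝ} (hlam : 1 ≤ lam) :
    U (lam * x) ≤ lam ^ γ * U x := by
  have hUdiff : Differentiable ℝ U := hC1.differentiable one_ne_zero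
  have hx0 : x < 0 := lt_of_le_of_lt hx hxbar
  -- f t = (-U (t*x)) * t ^ (-γ)
  set f : ℝ → ℝ := fun t => (-U (t * x)) * t ^ (-γ) with hf
  have hderiv : ∀ t : ℝ, 0 < t →
      HasDerivAt f ((-(deriv U (t * x) * x)) * t ^ (-γ)
        + (-U (t * x)) * (-γ * t ^ (-γ - 1))) t := by
    intro t ht
    have h1 : HasDerivAt (fun t : ℝ => -U (t * x)) (-(deriv U (t * x) * x)) t := by
      have := ((hUdiff (t * x)).hasDerivAt.comp t (hasDerivAt_mul_const x))
      exact this.neg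
    have h2 : HasDerivAt (fun t : ℝ => t ^ (-γ)) (-γ * t ^ (-γ - 1)) t :=
      Real.hasDerivAt_rpow_const (Or.inl (ne_of_gt ht))
    exact h1.mul h2
  have hmonoIci : MonotoneOn f (Set.Ici (1:ℝ)) := by
    apply monotoneOn_of_deriv_nonneg (convex_Ici 1)
    · intro t ht
      exact ((hderiv t (lt_of_lt_of_le one_pos ht)).differentiableAt).continuousAt.continuousWithinAt
    · intro t ht
      rw [interior_Ici] at ht
      exact ((hderiv t (lt_trans one_pos ht)).differentiableAt).differentiableWithinAt
    · intro t ht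
      rw [interior_Ici] at ht
      have ht0 : (0:ℝ) < t := lt_trans one_pos ht
      rw [(hderiv t ht0).deriv]
      -- show the derivative is nonneg
      have hy : t * x ≤ xbar := by nlinarith [le_of_lt (Set.mem_Ioi.mp ht)]
      have hu : U (t * x) < 0 := lt_of_le_of_lt (hmono hy) hUxbar
      have hr : γ < (t * x) * deriv U (t * x) / U (t * x) := hrat _ hy
      have hvd : (t * x) * deriv U (t * x) < γ * U (t * x) :=
        (lt_div_iff_of_neg hu).mp hr
      have hp : 0 < t ^ (-γ - 1) := Real.rpow_pos_of_pos ht0 _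
      have hpow : t ^ (-γ) = t ^ (-γ - 1) * t := by
        rw [← Real.rpow_add_one (ne_of_gt ht0)]; ring_nf
      rw [hpow]
      nlinarith [mul_pos hp (sub_pos.mpr hvd)]
  have hlam0 : (0:ℝ) < lam := lt_of_lt_of_le one_pos hlam
  have hmle : f 1 ≤ f lam :=
    hmonoIci (Set.self_mem_Ici) (Set.mem_Ici.mpr hlam) hlam
  have hf1 : f 1 = -U x := by simp [hf, Real.one_rpow]
  have hflam : f lam = (-U (lam * x)) * lam ^ (-γ) := rfl
  rw [hf1, hflam] at hmle
  have hrp : (0:ℝ) < lam ^ γ := Real.rpow_pos_of_pos hlam0 _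
  have hinv : lam ^ (-γ) * lam ^ γ = 1 := by
    rw [← Real.rpow_add hlam0]; simp
  have hfin : -U x * lam ^ γ ≤ -U (lam * x) := by
    have h := mul_le_mul_of_nonneg_right hmle (le_of_lt hrp)
    rw [mul_assoc, hinv, mul_one] at h
    exact h
  have : lam ^ γ * U x = -(-U x * lam ^ γ) := by ring
  linarith

/-- Let `U : ℝ → ℝ` be concave, nondecreasing, non-constant and continuously
differentiable with `AE₋(U) > 1`, and let `γ` satisfy `1 < γ` and `(γ : EReal) < AE₋(U)`.
Then there is `x̄ < 0` with `U x̄ < 0` and `x·U'(x)/U(x) > γ` for all `x ≤ x̄`; and for any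
such `x̄`, with `C := (U 0)⁺ + (U 0)⁻ + (U x̄)⁻` one has `C > 0` and
`U (λ·x) ≤ λ^γ · (U x + C)` for every `λ ≥ 1` and every `x`. -/
theorem AE_minus_growth (U : ℝ → ℝ) (hconc : ConcaveOn ℝ Set.univ U) (hmono : Monotone U)
    (hnonconst : ∃ a b : ℝ, U a ≠ U b) (hC1 : ContDiff ℝ 1 U)
    (hAE : 1 < AEminus U) (γ : ℝ) (hγ1 : 1 < γ) (hγ2 : (γ : EReal) < AEminus U) :
    (∃ xbar : ℝ, xbar < 0 ∧ U xbar < 0 ∧ ∀ x ≤ xbar, γ < x * deriv U x / U x) ∧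
    (∀ xbar : ℝ, xbar < 0 → U xbar < 0 → (∀ x ≤ xbar, γ < x * deriv U x / U x) →
      0 < max (U 0) 0 + max (-U 0) 0 + max (-U xbar) 0 ∧
      ∀ lam : ℝ, 1 ≤ lam → ∀ x : ℝ,
        U (lam * x) ≤ lam ^ γ * (U x + (max (U 0) 0 + max (-U 0) 0 + max (-U xbar) 0))) := by
  have hUdiff : Differentiable ℝ U := hC1.differentiable one_ne_zero
  constructor
  · -- existence of xbar
    have hev : ∀ᶠ x in atBot, (γ : EReal) < ((x * deriv U x / U x : ℝ) : EReal) :=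
      Filter.eventually_lt_of_lt_liminf hγ2
    rcases Filter.eventually_atBot.mp hev with ⟨a, ha⟩
    refine ⟨min a (-1), lt_of_le_of_lt (min_le_right _ _) (by norm_num), ?_, ?_⟩
    · -- U (min a (-1)) < 0
      set z := min a (-1) with hz
      have hz0 : z < 0 := lt_of_le_of_lt (min_le_right _ _) (by norm_num)
      have hrz : γ < z * deriv U z / U z := by
        have := ha z (min_le_left _ _)
        exact_mod_cast this
      by_contra hcon
      push_neg at hcon
      have hd : 0 ≤ deriv U z := mono_hasDerivAt_nonneg hmono (hUdiff z).hasDerivAt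
      have : z * deriv U z / U z ≤ 0 :=
        div_nonpos_of_nonpos_of_nonneg (mul_nonpos_of_nonpos_of_nonneg (le_of_lt hz0) hd) hcon
      linarith
    · intro x hx
      have := ha x (le_trans hx (min_le_left _ _))
      exact_mod_cast this
  · intro xbar hxbar hUxbar hrat
    set C := max (U 0) 0 + max (-U 0) 0 + max (-U xbar) 0 with hCdef
    have hM1 : 0 ≤ max (U 0) 0 := le_max_right _ _
    have hM2 : 0 ≤ max (-U 0) 0 := le_max_right _ _
    have hM3 : 0 < max (-U xbar) 0 := lt_max_of_lt_left (neg_pos.mpr hUxbar)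
    have hC0 : 0 < C := by positivity
    refine ⟨hC0, ?_⟩
    intro lam hlam x
    have hlam0 : (0:ℝ) < lam := lt_of_lt_of_le one_pos hlam
    have hrp : (0:ℝ) < lam ^ γ := Real.rpow_pos_of_pos hlam0 _
    have hrp1 : (1:ℝ) ≤ lam ^ γ := Real.one_le_rpow hlam (by linarith)
    rcases le_or_gt x xbar with hx | hx
    · -- x ≤ xbar : key growth
      have := key_growth hmono hC1 hγ1 hxbar hUxbar hrat hx hlam
      nlinarith
    · rcases le_or_gt x 0 with hx0 | hx0
      · -- xbar < x ≤ 0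
        have h1 : lam * x ≤ 0 := mul_nonpos_of_nonneg_of_nonpos (le_of_lt hlam0) hx0
        have h2 : U (lam * x) ≤ U 0 := hmono h1
        have h3 : U 0 ≤ max (U 0) 0 := le_max_left _ _
        have h4 : U xbar ≤ U x := hmono (le_of_lt hx)
        have h5 : -U xbar ≤ max (-U xbar) 0 := le_max_left _ _
        have hUxC : 0 ≤ U x + C := by simp only [hCdef]; linarith
        have hkey : U x + C ≥ max (U 0) 0 := by simp only [hCdef]; linarith
        nlinarith [mul_nonneg (by linarith : (0:ℝ) ≤ lam ^ γ - 1) hUxC]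
      · -- 0 < x
        have hle1 : 1/lam ≤ 1 := by
          rw [div_le_one hlam0]; linarith
        have hconcineq : (1/lam) * U (lam * x) + (1 - 1/lam) * U 0 ≤ U x := by
          have h := hconc.2 (Set.mem_univ (lam * x)) (Set.mem_univ (0:ℝ))
            (show (0:ℝ) ≤ 1/lam by positivity)
            (show (0:ℝ) ≤ 1 - 1/lam by linarith)
            (show 1/lam + (1 - 1/lam) = 1 by ring)
          have hpt : (1/lam) • (lam * x) + (1 - 1/lam) • (0:ℝ) = x := by
            simp only [smul_eq_mul]; field_simp; ring
          rw [hpt] at h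
          simpa [smul_eq_mul] using h
        -- U (lam*x) ≤ lam * U x - (lam - 1) * U 0
        have h6 : U (lam * x) ≤ lam * U x - (lam - 1) * U 0 := by
          have h := mul_le_mul_of_nonneg_left hconcineq (le_of_lt hlam0)
          have e1 : lam * (1/lam * U (lam * x) + (1 - 1/lam) * U 0)
              = U (lam * x) + (lam - 1) * U 0 := by
            field_simp
          rw [e1] at h
          linarith
        have h7 : -U 0 ≤ max (-U 0) 0 := le_max_left _ _
        have h8 : U 0 ≤ U x := hmono (le_of_lt hx0)
        have hUxC : 0 ≤ U x + C := by simp only [hCdef]; linarith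
        have h9 : lam ≤ lam ^ γ := by
          calc lam = lam ^ (1:ℝ) := (Real.rpow_one lam).symm
          _ ≤ lam ^ γ := Real.rpow_le_rpow_of_exponent_le hlam (le_of_lt hγ1)
        -- U(lam x) ≤ lam (U x + C) ≤ lam^γ (U x + C)
        have h10 : U (lam * x) ≤ lam * (U x + C) := by
          simp only [hCdef]
          nlinarith [mul_le_mul_of_nonneg_left h7 (by linarith : (0:ℝ) ≤ lam - 1),
            mul_nonneg (le_of_lt hlam0) hM1, mul_nonneg (le_of_lt hlam0) (le_of_lt hM3),
            mul_nonneg (le_of_lt hlam0) hM2]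
        calc U (lam * x) ≤ lam * (U x + C) := h10
        _ ≤ lam ^ γ * (U x + C) := mul_le_mul_of_nonneg_right h9 hUxC
end

section
/- Let Ũ : ℝ → ℝ be concave, nondecreasing, non-constant and continuously differentiable, let z ∈ ℝ, and define U : ℝ → ℝ by U(x) := Ũ(x − z). Then AE₋(U) = AE₋(Ũ); and if moreover lim_{x→+∞} Ũ(x) > 0 (equivalently Ũ(x₀) > 0 for some x₀), then AE₊(U) = AE₊(Ũ). -/
open Filter Set

lemma AE_limsup_aux_le {l : Filter ℝ} [l.NeBot] {f g : ℝ → ℝ}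
    (hf : ∀ᶠ x in l, 0 ≤ f x)
    (h : ∀ ε : ℝ, 0 < ε → ∀ᶠ x in l, g x ≤ (1 + ε) * f x) :
    limsup (fun x => ((g x : ℝ) : EReal)) l ≤ limsup (fun x => ((f x : ℝ) : EReal)) l := by
  by_contra hlt
  push_neg at hlt
  have hL0 : (0 : EReal) ≤ limsup (fun x => ((f x : ℝ) : EReal)) l := by
    refine le_limsup_of_frequently_le ?_
    exact (hf.mono fun x hx => by exact_mod_cast hx).frequently
  obtain ⟨c, hc1, hc2⟩ := EReal.exists_between_coe_real hlt
  obtain ⟨b, hb1, hb2⟩ := EReal.exists_between_coe_real hc1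
  have hb0 : (0 : ℝ) < b := by exact_mod_cast lt_of_le_of_lt hL0 hb1
  have hbc : b < c := by exact_mod_cast hb2
  set ε := (c - b) / (2 * b) with hε
  have hεpos : 0 < ε := div_pos (by linarith) (by linarith)
  have hεb : ε * b = (c - b) / 2 := by
    rw [hε]; field_simp
  have hev1 : ∀ᶠ x in l, (f x : EReal) < (b : EReal) := eventually_lt_of_limsup_lt hb1
  have hkey : limsup (fun x => ((g x : ℝ) : EReal)) l ≤ (((1 + ε) * b : ℝ) : EReal) := by
    refine limsup_le_of_le (by isBoundedDefault) ?_
    filter_upwards [h ε hεpos, hev1, hf] with x h1 h2 h3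
    have hfb : f x < b := by exact_mod_cast h2
    have : g x ≤ (1 + ε) * b := h1.trans (by nlinarith)
    exact_mod_cast this
  have hlt2 : (((1 + ε) * b : ℝ) : EReal) < (c : EReal) := by
    have : (1 + ε) * b < c := by nlinarith
    exact_mod_cast this
  exact absurd hc2 (not_lt.mpr (hkey.trans hlt2.le))

lemma AE_liminf_aux_le {l : Filter ℝ} [l.NeBot] {f g : ℝ → ℝ}
    (hg : ∀ᶠ x in l, 0 ≤ g x)
    (h : ∀ ε : ℝ, 0 < ε → ε < 1 → ∀ᶠ x in l, (1 - ε) * f x ≤ g x) :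
    liminf (fun x => ((f x : ℝ) : EReal)) l ≤ liminf (fun x => ((g x : ℝ) : EReal)) l := by
  by_contra hlt
  push_neg at hlt
  have hG0 : (0 : EReal) ≤ liminf (fun x => ((g x : ℝ) : EReal)) l := by
    refine le_liminf_of_le (by isBoundedDefault) ?_
    exact hg.mono fun x hx => by exact_mod_cast hx
  obtain ⟨c, hc1, hc2⟩ := EReal.exists_between_coe_real hlt
  obtain ⟨b, hb1, hb2⟩ := EReal.exists_between_coe_real hc2
  have hc0 : (0 : ℝ) < c := by exact_mod_cast lt_of_le_of_lt hG0 hc1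
  have hcb : c < b := by exact_mod_cast hb1
  have hb0 : (0 : ℝ) < b := hc0.trans hcb
  set ε := (b - c) / b with hε
  have hεpos : 0 < ε := div_pos (by linarith) hb0
  have hεlt1 : ε < 1 := by rw [hε, div_lt_one hb0]; linarith
  have hkey : (1 - ε) * b = c := by rw [hε]; field_simp; ring
  have hev1 : ∀ᶠ x in l, (b : EReal) < (f x : EReal) := eventually_lt_of_lt_liminf hb2
  have : (c : EReal) ≤ liminf (fun x => ((g x : ℝ) : EReal)) l := by
    refine le_liminf_of_le (by isBoundedDefault) ?_
    filter_upwards [h ε hεpos hεlt1, hev1] with x h1 h2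
    have hfb : b < f x := by exact_mod_cast h2
    have : c ≤ g x := by nlinarith
    exact_mod_cast this
  exact absurd hc1 (not_lt.mpr this)

lemma AE_limsup_mul_tendsto_one {l : Filter ℝ} [l.NeBot] {f c : ℝ → ℝ}
    (hf : ∀ᶠ x in l, 0 ≤ f x) (hc : Tendsto c l (nhds 1)) :
    limsup (fun x => ((f x * c x : ℝ) : EReal)) l = limsup (fun x => ((f x : ℝ) : EReal)) l := by
  have hfc0 : ∀ᶠ x in l, 0 ≤ f x * c x := by
    filter_upwards [hf, hc.eventually_const_le (by norm_num : (1:ℝ)/2 < 1)] with x h1 h2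
    exact mul_nonneg h1 (le_trans (by norm_num) h2)
  apply le_antisymm
  · apply AE_limsup_aux_le hf
    intro ε hε
    filter_upwards [hf, hc.eventually_le_const (by linarith : (1:ℝ) < 1 + ε)] with x h1 h2
    calc f x * c x ≤ f x * (1 + ε) := mul_le_mul_of_nonneg_left h2 h1
      _ = (1 + ε) * f x := mul_comm _ _
  · apply AE_limsup_aux_le hfc0
    intro ε hε
    have h1ε : (0:ℝ) < 1 + ε := by linarith
    filter_upwards [hf,
      hc.eventually_const_le (show (1:ℝ)/(1+ε) < 1 by rw [div_lt_one h1ε]; linarith)] with x h1 h2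
    have h3 : 1 ≤ c x * (1 + ε) := (div_le_iff₀ h1ε).mp h2
    calc f x = f x * 1 := (mul_one _).symm
      _ ≤ f x * (c x * (1 + ε)) := mul_le_mul_of_nonneg_left h3 h1
      _ = (1 + ε) * (f x * c x) := by ring

lemma AE_liminf_mul_tendsto_one {l : Filter ℝ} [l.NeBot] {f c : ℝ → ℝ}
    (hf : ∀ᶠ x in l, 0 ≤ f x) (hc : Tendsto c l (nhds 1)) :
    liminf (fun x => ((f x * c x : ℝ) : EReal)) l = liminf (fun x => ((f x : ℝ) : EReal)) l := by
  have hfc0 : ∀ᶠ x in l, 0 ≤ f x * c x := by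
    filter_upwards [hf, hc.eventually_const_le (by norm_num : (1:ℝ)/2 < 1)] with x h1 h2
    exact mul_nonneg h1 (le_trans (by norm_num) h2)
  apply le_antisymm
  · apply AE_liminf_aux_le hf
    intro ε hε hε1
    filter_upwards [hf, hc.eventually_le_const (by linarith : (1:ℝ) < 1 + ε)] with x h1 h2
    have h3 : (1 - ε) * c x ≤ 1 := by nlinarith
    calc (1 - ε) * (f x * c x) = f x * ((1 - ε) * c x) := by ring
      _ ≤ f x * 1 := mul_le_mul_of_nonneg_left h3 h1
      _ = f x := mul_one _
  · apply AE_liminf_aux_le hfc0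
    intro ε hε hε1
    filter_upwards [hf, hc.eventually_const_le (show (1:ℝ) - ε < 1 by linarith)] with x h1 h2
    calc (1 - ε) * f x ≤ c x * f x := mul_le_mul_of_nonneg_right h2 h1
      _ = f x * c x := mul_comm _ _

lemma AE_map_add_atBot (z : ℝ) : map (fun y : ℝ => y + z) atBot = atBot := by
  apply le_antisymm
  · exact tendsto_atBot_add_const_right atBot z tendsto_id
  · have h : Tendsto (fun y : ℝ => y + (-z)) atBot atBot :=
      tendsto_atBot_add_const_right atBot (-z) tendsto_id
    calc atBot = map (fun y : ℝ => y + z) (map (fun y : ℝ => y + (-z)) atBot) := by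
          rw [map_map]; simp [Function.comp]
      _ ≤ map (fun y : ℝ => y + z) atBot := map_mono h

lemma AE_map_add_atTop (z : ℝ) : map (fun y : ℝ => y + z) atTop = atTop := by
  apply le_antisymm
  · exact tendsto_atTop_add_const_right atTop z tendsto_id
  · have h : Tendsto (fun y : ℝ => y + (-z)) atTop atTop :=
      tendsto_atTop_add_const_right atTop (-z) tendsto_id
    calc atTop = map (fun y : ℝ => y + z) (map (fun y : ℝ => y + (-z)) atTop) := by
          rw [map_map]; simp [Function.comp]
      _ ≤ map (fun y : ℝ => y + z) atTop := map_mono h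

lemma AE_tendsto_ratio_atBot (z : ℝ) : Tendsto (fun y : ℝ => (y + z) / y) atBot (nhds 1) := by
  have hneg : Tendsto (fun y : ℝ => -y) atBot atTop := tendsto_neg_atBot_atTop
  have h0 : Tendsto (fun y : ℝ => (-y)⁻¹) atBot (nhds 0) := hneg.inv_tendsto_atTop
  have h1 : Tendsto (fun y : ℝ => y⁻¹) atBot (nhds 0) := by
    have h2 := h0.neg
    rw [neg_zero] at h2
    exact h2.congr fun y => by rw [inv_neg, neg_neg]
  have h2 : Tendsto (fun y : ℝ => 1 + z * y⁻¹) atBot (nhds 1) := by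
    simpa using tendsto_const_nhds.add (h1.const_mul z)
  apply h2.congr'
  filter_upwards [eventually_lt_atBot (0:ℝ)] with y hy
  have hy0 : y ≠ 0 := ne_of_lt hy
  field_simp

lemma AE_tendsto_ratio_atTop (z : ℝ) : Tendsto (fun y : ℝ => (y + z) / y) atTop (nhds 1) := by
  have h2 : Tendsto (fun y : ℝ => 1 + z * y⁻¹) atTop (nhds 1) := by
    simpa using tendsto_const_nhds.add (tendsto_inv_atTop_zero.const_mul z)
  apply h2.congr'
  filter_upwards [eventually_gt_atTop (0:ℝ)] with y hy
  have hy0 : y ≠ 0 := ne_of_gt hy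
  field_simp

/-- Let `Ũ : ℝ → ℝ` be concave, nondecreasing, non-constant and continuously
differentiable, `z ∈ ℝ` and `U x := Ũ (x − z)`. Then `AE₋(U) = AE₋(Ũ)`; and if moreover
`Ũ x₀ > 0` for some `x₀`, then `AE₊(U) = AE₊(Ũ)`. -/
theorem AE_benchmark_shift (Utld : ℝ → ℝ) (hconc : ConcaveOn ℝ Set.univ Utld)
    (hmono : Monotone Utld) (hnonconst : ∃ a b : ℝ, Utld a ≠ Utld b)
    (hC1 : ContDiff ℝ 1 Utld) (z : ℝ) :
    AEminus (fun x => Utld (x - z)) = AEminus Utld ∧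
    ((∃ x₀ : ℝ, 0 < Utld x₀) → AEplus (fun x => Utld (x - z)) = AEplus Utld) := by
  have hdiff : Differentiable ℝ Utld := hC1.differentiable one_ne_zero
  have hd0 : ∀ x, 0 ≤ deriv Utld x := by
    intro x
    have hs := hconc.slope_le_deriv (Set.mem_univ x) (Set.mem_univ (x+1))
      (by linarith) (hdiff x)
    have h0 : 0 ≤ slope Utld x (x+1) := by
      rw [slope_def_field]
      apply div_nonneg _ (by linarith)
      have := hmono (le_of_lt (lt_add_one x))
      linarith
    exact h0.trans hs
  obtain ⟨a, b, hab⟩ := hnonconst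
  have hex : ∃ p q : ℝ, p < q ∧ Utld p < Utld q := by
    rcases lt_trichotomy a b with h | h | h
    · exact ⟨a, b, h, lt_of_le_of_ne (hmono h.le) hab⟩
    · exact absurd (by rw [h]) hab
    · exact ⟨b, a, h, lt_of_le_of_ne (hmono h.le) (Ne.symm hab)⟩
  obtain ⟨p, q, hpq, hUpq⟩ := hex
  have hDp : 0 < deriv Utld p := by
    have hs := hconc.slope_le_deriv (Set.mem_univ p) (Set.mem_univ q) hpq (hdiff p)
    have h0 : 0 < slope Utld p q := by
      rw [slope_def_field]; exact div_pos (by linarith) (by linarith)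
    linarith
  have htang : ∀ y, y < p → Utld y ≤ Utld p - deriv Utld p * (p - y) := by
    intro y hy
    have hs := hconc.deriv_le_slope (Set.mem_univ y) (Set.mem_univ p) hy (hdiff p)
    rw [slope_def_field] at hs
    have hpy : (0:ℝ) < p - y := by linarith
    have h2 := (le_div_iff₀ hpy).mp hs
    linarith
  set y₀ := p - (|Utld p| + 1) / deriv Utld p with hy₀
  have hy₀p : y₀ < p := by
    have h1 : 0 < (|Utld p| + 1) / deriv Utld p :=
      div_pos (by positivity) hDp
    rw [hy₀]; linarith
  have hUy₀ : Utld y₀ < 0 := by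
    have h1 := htang y₀ hy₀p
    have h2 : deriv Utld p * (p - y₀) = |Utld p| + 1 := by
      have hD0 : deriv Utld p ≠ 0 := ne_of_gt hDp
      rw [hy₀]; field_simp; ring
    have h3 := le_abs_self (Utld p)
    linarith
  have hUneg : ∀ᶠ y in atBot, Utld y < 0 := by
    filter_upwards [eventually_le_atBot y₀] with y hy
    exact lt_of_le_of_lt (hmono hy) hUy₀
  have hder : ∀ x : ℝ, deriv (fun x => Utld (x - z)) x = deriv Utld (x - z) :=
    fun x => deriv_comp_sub_const Utld z x
  constructor
  · unfold AEminus
    have step1 : (fun x : ℝ =>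
        ((x * deriv (fun x => Utld (x - z)) x / Utld (x - z) : ℝ) : EReal))
        = fun x : ℝ => ((x * deriv Utld (x - z) / Utld (x - z) : ℝ) : EReal) := by
      funext x; rw [hder]
    rw [step1]
    have step2 : Filter.liminf
        (fun x : ℝ => ((x * deriv Utld (x - z) / Utld (x - z) : ℝ) : EReal)) atBot
        = Filter.liminf
        (fun y : ℝ => (((y + z) * deriv Utld y / Utld y : ℝ) : EReal)) atBot := by
      conv_lhs => rw [← AE_map_add_atBot z, ← liminf_comp]
      apply liminf_congr
      apply Filter.Eventually.of_forall
      intro y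
      simp [Function.comp, add_sub_cancel_right]
    rw [step2]
    have hfnn : ∀ᶠ y in atBot, 0 ≤ y * deriv Utld y / Utld y := by
      filter_upwards [eventually_lt_atBot (0:ℝ), hUneg] with y hy hU
      have h1 : y * deriv Utld y ≤ 0 := mul_nonpos_iff.mpr (Or.inr ⟨hy.le, hd0 y⟩)
      exact div_nonneg_iff.mpr (Or.inr ⟨h1, hU.le⟩)
    have heq : ∀ᶠ y in atBot, (((y + z) * deriv Utld y / Utld y : ℝ) : EReal)
        = (((y * deriv Utld y / Utld y) * ((y + z) / y) : ℝ) : EReal) := by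
      filter_upwards [eventually_lt_atBot (0:ℝ)] with y hy
      congr 1
      have hy0 : y ≠ 0 := ne_of_lt hy
      rcases eq_or_ne (Utld y) 0 with h | h
      · simp [h]
      · field_simp
    rw [liminf_congr heq]
    exact AE_liminf_mul_tendsto_one hfnn (AE_tendsto_ratio_atBot z)
  · rintro ⟨x₀, hx₀⟩
    have hUpos : ∀ᶠ y in atTop, 0 < Utld y := by
      filter_upwards [eventually_ge_atTop x₀] with y hy
      exact lt_of_lt_of_le hx₀ (hmono hy)
    unfold AEplus
    have step1 : (fun x : ℝ =>
        ((x * deriv (fun x => Utld (x - z)) x / Utld (x - z) : ℝ) : EReal))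
        = fun x : ℝ => ((x * deriv Utld (x - z) / Utld (x - z) : ℝ) : EReal) := by
      funext x; rw [hder]
    rw [step1]
    have step2 : Filter.limsup
        (fun x : ℝ => ((x * deriv Utld (x - z) / Utld (x - z) : ℝ) : EReal)) atTop
        = Filter.limsup
        (fun y : ℝ => (((y + z) * deriv Utld y / Utld y : ℝ) : EReal)) atTop := by
      conv_lhs => rw [← AE_map_add_atTop z, ← limsup_comp]
      apply limsup_congr
      apply Filter.Eventually.of_forall
      intro y
      simp [Function.comp, add_sub_cancel_right]
    rw [step2]
    have hfnn : ∀ᶠ y in atTop, 0 ≤ y * deriv Utld y / Utld y := by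
      filter_upwards [eventually_gt_atTop (0:ℝ), hUpos] with y hy hU
      exact div_nonneg (mul_nonneg hy.le (hd0 y)) hU.le
    have heq : ∀ᶠ y in atTop, (((y + z) * deriv Utld y / Utld y : ℝ) : EReal)
        = (((y * deriv Utld y / Utld y) * ((y + z) / y) : ℝ) : EReal) := by
      filter_upwards [eventually_gt_atTop (0:ℝ)] with y hy
      congr 1
      have hy0 : y ≠ 0 := ne_of_gt hy
      rcases eq_or_ne (Utld y) 0 with h | h
      · simp [h]
      · field_simp
    rw [limsup_congr heq]
    exact AE_limsup_mul_tendsto_one hfnn (AE_tendsto_ratio_atTop z)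
end

section
/- For every real constant c there exists β ∈ (0,1] with the following property: every Borel probability measure μ on ℝ such that the function x ↦ exp(|x|) is μ-integrable with ∫ exp(|x|) dμ(x) ≤ c, ∫ x dμ(x) = 0 and ∫ x² dμ(x) = 1, satisfies μ({x : x < −β}) ≥ β and μ({x : x > β}) ≥ β. -/
set_option maxHeartbeats 1000000


open MeasureTheory
open scoped ENNReal

/-- Pointwise bound `x² ≤ 2 exp |x|`. -/
lemma aux_sq_le_two_exp (x : ℝ) : x ^ 2 ≤ 2 * Real.exp |x| := by
  have h := Real.pow_div_factorial_le_exp (x := |x|) (abs_nonneg x) 2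
  have h2 : x ^ 2 = |x| ^ 2 := (sq_abs x).symm
  norm_num [Nat.factorial] at h
  nlinarith [abs_nonneg x]

/-- Pointwise bound `x⁴ ≤ 24 exp |x|`. -/
lemma aux_pow4_le (x : ℝ) : |x| ^ 4 ≤ 24 * Real.exp |x| := by
  have h := Real.pow_div_factorial_le_exp (x := |x|) (abs_nonneg x) 4
  norm_num [Nat.factorial] at h
  linarith

/-- Key one-sided lemma: mass at least `β` below `-β`, with `β` explicit in `c'`. -/
lemma aux_key (c' : ℝ) (hc1 : 1 ≤ c') (μ : Measure ℝ) (hprob : IsProbabilityMeasure μ)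
    (hint : Integrable (fun x : ℝ => Real.exp |x|) μ)
    (hc : (∫ x, Real.exp |x| ∂μ) ≤ c')
    (hmean : (∫ x, x ∂μ) = 0)
    (hvar : (∫ x, x ^ 2 ∂μ) = 1) :
    ENNReal.ofReal ((1 / (192 * c')) ^ 2 / 256)
      ≤ μ {x : ℝ | x < -((1 / (192 * c')) ^ 2 / 256)} := by
  have hc0 : (0:ℝ) < c' := lt_of_lt_of_le one_pos hc1
  set p : ℝ := 1 / (192 * c') with hpdef
  set β : ℝ := p ^ 2 / 256 with hβdef
  have hp0 : 0 < p := by positivity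
  have hple : p ≤ 1 / 192 := by
    rw [hpdef]
    rw [div_le_div_iff₀ (by positivity) (by norm_num)]
    nlinarith
  have hβ0 : 0 < β := by positivity
  have hβle : β ≤ p / 256 := by
    rw [hβdef]
    have : p ^ 2 ≤ p := by nlinarith
    linarith
  set M : ℝ := Real.sqrt (48 * c') with hMdef
  have hM2 : M ^ 2 = 48 * c' := Real.sq_sqrt (by positivity)
  have hM0 : 0 < M := Real.sqrt_pos.2 (by positivity)
  -- integrability of x and x²
  have hexp_nonneg : ∀ x : ℝ, (0:ℝ) ≤ Real.exp |x| := fun x => (Real.exp_pos _).le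
  have hix : Integrable (fun x : ℝ => x) μ := by
    refine hint.mono (measurable_id.aestronglyMeasurable) (ae_of_all _ fun x => ?_)
    have := Real.add_one_le_exp |x|
    simp only [Real.norm_eq_abs, abs_of_nonneg (hexp_nonneg x)]
    linarith
  have hix2 : Integrable (fun x : ℝ => x ^ 2) μ := by
    refine (hint.const_mul 2).mono
      ((measurable_id.pow_const 2).aestronglyMeasurable) (ae_of_all _ fun x => ?_)
    have h1 := aux_sq_le_two_exp x
    have h2 : (0:ℝ) ≤ x ^ 2 := sq_nonneg x
    simp only [Real.norm_eq_abs, abs_of_nonneg h2,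
      abs_of_nonneg (by positivity : (0:ℝ) ≤ 2 * Real.exp |x|)]
    exact h1
  -- Step A : tail second moment small
  set S : Set ℝ := {x : ℝ | M < |x|} with hSdef
  have hSmeas : MeasurableSet S := measurableSet_lt measurable_const measurable_abs
  have hA : (∫ x in S, x ^ 2 ∂μ) ≤ 1 / 2 := by
    have hpt : ∀ x ∈ S, x ^ 2 ≤ 24 / M ^ 2 * Real.exp |x| := by
      intro x hx
      have hxM : M < |x| := hx
      have h4 := aux_pow4_le x
      have hx2 : x ^ 2 = |x| ^ 2 := (sq_abs x).symm
      have hMx : M ^ 2 ≤ |x| ^ 2 := by nlinarith [abs_nonneg x]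
      rw [div_mul_eq_mul_div, le_div_iff₀ (by positivity)]
      nlinarith [sq_nonneg x, hexp_nonneg x, sq_nonneg (|x|)]
    have h1 : (∫ x in S, x ^ 2 ∂μ) ≤ ∫ x in S, 24 / M ^ 2 * Real.exp |x| ∂μ :=
      setIntegral_mono_on hix2.integrableOn ((hint.const_mul _).integrableOn) hSmeas hpt
    have h2 : (∫ x in S, 24 / M ^ 2 * Real.exp |x| ∂μ)
        = 24 / M ^ 2 * ∫ x in S, Real.exp |x| ∂μ := integral_const_mul _ _
    have h3 : (∫ x in S, Real.exp |x| ∂μ) ≤ ∫ x, Real.exp |x| ∂μ :=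
      setIntegral_le_integral hint (ae_of_all _ hexp_nonneg)
    have h4 : 24 / M ^ 2 * (∫ x, Real.exp |x| ∂μ) ≤ 24 / M ^ 2 * c' := by
      apply mul_le_mul_of_nonneg_left hc (by positivity)
    have h5 : 24 / M ^ 2 * c' = 1 / 2 := by
      rw [hM2]; field_simp; ring
    calc (∫ x in S, x ^ 2 ∂μ) ≤ 24 / M ^ 2 * ∫ x in S, Real.exp |x| ∂μ := by
          rw [← h2]; exact h1
      _ ≤ 24 / M ^ 2 * c' := le_trans (mul_le_mul_of_nonneg_left h3 (by positivity)) h4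
      _ = 1 / 2 := h5
  -- Step B : central second moment large
  have hB : (1:ℝ) / 2 ≤ ∫ x in Sᶜ, x ^ 2 ∂μ := by
    have := integral_add_compl hSmeas hix2
    rw [hvar] at this
    linarith
  -- Step C : mass of {1/2 < |x|} at least p
  set T : Set ℝ := {x : ℝ | 1 / 2 < |x|} with hTdef
  have hTmeas : MeasurableSet T := measurableSet_lt measurable_const measurable_abs
  have hμfin : ∀ s : Set ℝ, μ s ≠ ∞ := fun s => (measure_lt_top μ s).ne
  have hx2nonneg : ∀ x : ℝ, (0:ℝ) ≤ x ^ 2 := fun x => sq_nonneg x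
  have hC : p ≤ (μ T).toReal := by
    have hsub : Sᶜ ⊆ (Sᶜ ∩ T) ∪ Tᶜ := by
      intro x hx
      by_cases hxT : x ∈ T
      · exact Or.inl ⟨hx, hxT⟩
      · exact Or.inr hxT
    have hmono : (∫ x in Sᶜ, x ^ 2 ∂μ) ≤ ∫ x in (Sᶜ ∩ T) ∪ Tᶜ, x ^ 2 ∂μ := by
      refine setIntegral_mono_set hix2.integrableOn (ae_of_all _ hx2nonneg)
        (HasSubset.Subset.eventuallyLE hsub)
    have hdisj : Disjoint (Sᶜ ∩ T) Tᶜ :=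
      Disjoint.mono_left Set.inter_subset_right disjoint_compl_right
    have hunion : (∫ x in (Sᶜ ∩ T) ∪ Tᶜ, x ^ 2 ∂μ)
        = (∫ x in Sᶜ ∩ T, x ^ 2 ∂μ) + ∫ x in Tᶜ, x ^ 2 ∂μ :=
      setIntegral_union hdisj hTmeas.compl hix2.integrableOn hix2.integrableOn
    have hb1 : (∫ x in Sᶜ ∩ T, x ^ 2 ∂μ) ≤ M ^ 2 * (μ T).toReal := by
      have hb := norm_setIntegral_le_of_norm_le_const (s := Sᶜ ∩ T)
        (f := fun x : ℝ => x ^ 2) (C := M ^ 2) (measure_lt_top μ _)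
        (fun x hx => by
          have hxS : ¬ M < |x| := hx.1
          push_neg at hxS
          simp only [Real.norm_eq_abs, abs_of_nonneg (hx2nonneg x)]
          calc x ^ 2 = |x| ^ 2 := (sq_abs x).symm
            _ ≤ M ^ 2 := by nlinarith [abs_nonneg x])
      rw [measureReal_def] at hb
      have hμm : (μ (Sᶜ ∩ T)).toReal ≤ (μ T).toReal :=
        ENNReal.toReal_mono (hμfin T) (measure_mono Set.inter_subset_right)
      have := le_trans (le_abs_self _) hb
      nlinarith [sq_nonneg M]
    have hb2 : (∫ x in Tᶜ, x ^ 2 ∂μ) ≤ 1 / 4 := by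
      have hb := norm_setIntegral_le_of_norm_le_const (s := Tᶜ)
        (f := fun x : ℝ => x ^ 2) (C := 1 / 4) (measure_lt_top μ _)
        (fun x hx => by
          have hxT : ¬ 1 / 2 < |x| := hx
          push_neg at hxT
          simp only [Real.norm_eq_abs, abs_of_nonneg (hx2nonneg x)]
          calc x ^ 2 = |x| ^ 2 := (sq_abs x).symm
            _ ≤ 1 / 4 := by nlinarith [abs_nonneg x])
      rw [measureReal_def] at hb
      have hμ1 : (μ Tᶜ).toReal ≤ 1 := by
        have := prob_le_one (μ := μ) (s := Tᶜ)
        exact ENNReal.toReal_le_of_le_ofReal one_pos.le (by simpa using this)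
      have := le_trans (le_abs_self _) hb
      nlinarith
    have hchain : (1:ℝ) / 2 ≤ M ^ 2 * (μ T).toReal + 1 / 4 := by
      calc (1:ℝ) / 2 ≤ ∫ x in Sᶜ, x ^ 2 ∂μ := hB
        _ ≤ (∫ x in Sᶜ ∩ T, x ^ 2 ∂μ) + ∫ x in Tᶜ, x ^ 2 ∂μ := by rw [← hunion]; exact hmono
        _ ≤ M ^ 2 * (μ T).toReal + 1 / 4 := add_le_add hb1 hb2
    have hM2' : M ^ 2 = 48 * c' := hM2
    have hd : 1 / (4 * M ^ 2) ≤ (μ T).toReal := by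
      rw [div_le_iff₀ (by positivity : (0:ℝ) < 4 * M ^ 2)]
      nlinarith [hchain]
    calc p = 1 / (4 * M ^ 2) := by rw [hpdef, hM2']; ring_nf
      _ ≤ (μ T).toReal := hd
  -- Step D : case split
  set Aneg : Set ℝ := {x : ℝ | x < -(1/2)} with hAnegdef
  set Apos : Set ℝ := {x : ℝ | 1/2 < x} with hAposdef
  have hAnegmeas : MeasurableSet Aneg := measurableSet_lt measurable_id measurable_const
  have hAposmeas : MeasurableSet Apos := measurableSet_lt measurable_const measurable_id
  have hTsub : T ⊆ Aneg ∪ Apos := by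
    intro x hx
    have h : 1 / 2 < |x| := hx
    rcases le_or_gt 0 x with h0 | h0
    · right; rw [abs_of_nonneg h0] at h; exact h
    · left; rw [abs_of_neg h0] at h
      show x < -(1/2); linarith
  have hD : p ≤ (μ Aneg).toReal + (μ Apos).toReal := by
    have h1 : μ T ≤ μ Aneg + μ Apos :=
      le_trans (measure_mono hTsub) (measure_union_le _ _)
    have h2 : (μ T).toReal ≤ (μ Aneg).toReal + (μ Apos).toReal := by
      rw [← ENNReal.toReal_add (hμfin _) (hμfin _)]
      exact ENNReal.toReal_mono (by simp [ENNReal.add_ne_top, hμfin]) h1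
    linarith
  rcases le_or_gt (p / 2) (μ Aneg).toReal with hcase | hcase
  · -- easy case : already mass ≥ p/2 below -1/2 ⊆ below -β
    have hsub : Aneg ⊆ {x : ℝ | x < -β} := by
      intro x hx
      have hx' : x < -(1/2) := hx
      have : β ≤ 1 / 2 := le_trans hβle (by linarith)
      simp only [Set.mem_setOf_eq]
      linarith
    apply le_trans _ (measure_mono hsub)
    apply ENNReal.ofReal_le_of_le_toReal
    have : β ≤ p / 2 := le_trans hβle (by linarith)
    linarith
  · -- hard case : mass above 1/2 is ≥ p/2, use the mean
    have hApos : p / 2 ≤ (μ Apos).toReal := by linarith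
    set P : Set ℝ := {x : ℝ | 0 < x} with hPdef
    have hPmeas : MeasurableSet P := measurableSet_lt measurable_const measurable_id
    -- lower bound on ∫_P x
    have hlow : p / 4 ≤ ∫ x in P, x ∂μ := by
      have h1 : (1:ℝ)/2 * (μ Apos).toReal ≤ ∫ x in Apos, x ∂μ :=
        by have := setIntegral_ge_of_const_le hAposmeas (hμfin _)
            (fun x hx => le_of_lt hx) hix.integrableOn
           rw [smul_eq_mul, measureReal_def, mul_comm] at this; exact this
      have h2 : (∫ x in Apos, x ∂μ) ≤ ∫ x in P, x ∂μ := by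
        refine setIntegral_mono_set hix.integrableOn ?_ ?_
        · exact (ae_restrict_iff' hPmeas).2 (ae_of_all _ fun x hx => le_of_lt hx)
        · refine HasSubset.Subset.eventuallyLE fun x hx => ?_
          have : (1:ℝ)/2 < x := hx
          simp only [P, Set.mem_setOf_eq]; linarith
      nlinarith
    -- mean zero : ∫_{Pᶜ} (-x) = ∫_P x
    have hmean' : (∫ x in Pᶜ, -x ∂μ) = ∫ x in P, x ∂μ := by
      have h := integral_add_compl hPmeas hix
      rw [hmean] at h
      have : (∫ x in Pᶜ, -x ∂μ) = -∫ x in Pᶜ, x ∂μ := integral_neg _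
      linarith
    -- split Pᶜ
    set A : Set ℝ := {x : ℝ | x < -β} with hAdef
    have hAmeas : MeasurableSet A := measurableSet_lt measurable_id measurable_const
    have hPc : Pᶜ = A ∪ Set.Icc (-β) 0 := by
      ext x
      simp only [Set.mem_compl_iff, P, Set.mem_setOf_eq, not_lt, Set.mem_union, A,
        Set.mem_Icc]
      constructor
      · intro h
        rcases lt_or_ge x (-β) with h' | h'
        · exact Or.inl h'
        · exact Or.inr ⟨h', h⟩
      · rintro (h | ⟨_, h⟩)
        · linarith
        · exact h
    have hdisj : Disjoint A (Set.Icc (-β) 0) := by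
      rw [Set.disjoint_left]
      intro x hx hx'
      have h1 : x < -β := hx
      have h2 : -β ≤ x := hx'.1
      linarith
    have hsplit : (∫ x in Pᶜ, -x ∂μ)
        = (∫ x in A, -x ∂μ) + ∫ x in Set.Icc (-β) 0, -x ∂μ := by
      rw [hPc]
      exact setIntegral_union hdisj measurableSet_Icc
        hix.neg.integrableOn hix.neg.integrableOn
    have hIcc : (∫ x in Set.Icc (-β) 0, -x ∂μ) ≤ β := by
      have hb := norm_setIntegral_le_of_norm_le_const (s := Set.Icc (-β) 0)
        (f := fun x : ℝ => -x) (C := β) (measure_lt_top μ _)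
        (fun x hx => by
          have h1 : -β ≤ x := hx.1
          have h2 : x ≤ 0 := hx.2
          rw [Real.norm_eq_abs, abs_of_nonneg (by linarith : (0:ℝ) ≤ -x)]
          linarith)
      rw [measureReal_def] at hb
      have hμ1 : (μ (Set.Icc (-β) 0)).toReal ≤ 1 := by
        have := prob_le_one (μ := μ) (s := Set.Icc (-β) 0)
        exact ENNReal.toReal_le_of_le_ofReal one_pos.le (by simpa using this)
      have := le_trans (le_abs_self _) hb
      nlinarith [ENNReal.toReal_nonneg (a := μ (Set.Icc (-β) 0))]
    -- upper bound on ∫_A (-x)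
    have hAbound : (∫ x in A, -x ∂μ) ≤ p / 32 + 8 / p * (μ A).toReal := by
      have hpt : ∀ x ∈ A, -x ≤ p / 32 * x ^ 2 + 8 / p := by
        intro x _
        obtain ⟨a, ha, hax⟩ : ∃ a : ℝ, a = |x| ∧ a ^ 2 = x ^ 2 := ⟨|x|, rfl, sq_abs x⟩
        have h2 : -x ≤ a := ha ▸ neg_le_abs x
        have key : p / 32 * a ^ 2 + 8 / p - a = (p * a - 16) ^ 2 / (32 * p) := by
          field_simp
          ring
        have hnn : 0 ≤ p / 32 * a ^ 2 + 8 / p - a := by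
          rw [key]; positivity
        rw [hax] at hnn
        linarith
      have h1 : (∫ x in A, -x ∂μ) ≤ ∫ x in A, (p / 32 * x ^ 2 + 8 / p) ∂μ :=
        setIntegral_mono_on hix.neg.integrableOn
          (((hix2.const_mul _).add (integrable_const _)).integrableOn) hAmeas hpt
      have h2 : (∫ x in A, (p / 32 * x ^ 2 + 8 / p) ∂μ)
          = p / 32 * (∫ x in A, x ^ 2 ∂μ) + 8 / p * (μ A).toReal := by
        rw [integral_add ((hix2.const_mul _).integrableOn) (integrableOn_const
          (measure_lt_top μ _).ne), integral_const_mul, setIntegral_const]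
        simp [smul_eq_mul, mul_comm, measureReal_def]
      have h3 : (∫ x in A, x ^ 2 ∂μ) ≤ 1 := by
        rw [← hvar]
        exact setIntegral_le_integral hix2 (ae_of_all _ hx2nonneg)
      have h4 : p / 32 * (∫ x in A, x ^ 2 ∂μ) ≤ p / 32 :=
        le_trans (mul_le_mul_of_nonneg_left h3 (by positivity)) (by linarith)
      linarith
    -- combine
    have hfinal : β ≤ (μ A).toReal := by
      have h1 : p / 4 ≤ p / 32 + 8 / p * (μ A).toReal + β := by
        have := hmean'
        linarith [hlow, hsplit, hIcc, hAbound]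
      have hmul := mul_le_mul_of_nonneg_left h1 hp0.le
      have hid : p * (p / 32 + 8 / p * (μ A).toReal + β)
          = p ^ 2 / 32 + 8 * (μ A).toReal + p * β := by
        field_simp
      rw [hid] at hmul
      have hpβ : p * β ≤ p ^ 2 / 256 := by nlinarith
      rw [hβdef]
      nlinarith [ENNReal.toReal_nonneg (a := μ A)]
    exact ENNReal.ofReal_le_of_le_toReal hfinal

/-- For every real `c` there exists `β ∈ (0,1]` such that every Borel
probability measure `μ` on `ℝ` with `x ↦ exp |x|` integrable, `∫ exp |x| dμ ≤ c`,
`∫ x dμ = 0` and `∫ x² dμ = 1` satisfies `μ {x < −β} ≥ β` and `μ {x > β} ≥ β`. -/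
theorem exists_uniform_mass_bound (c : ℝ) :
    ∃ β : ℝ, 0 < β ∧ β ≤ 1 ∧
      ∀ μ : Measure ℝ, IsProbabilityMeasure μ →
        Integrable (fun x : ℝ => Real.exp |x|) μ →
        (∫ x, Real.exp |x| ∂μ) ≤ c →
        (∫ x, x ∂μ) = 0 →
        (∫ x, x ^ 2 ∂μ) = 1 →
        ENNReal.ofReal β ≤ μ {x : ℝ | x < -β} ∧ ENNReal.ofReal β ≤ μ {x : ℝ | β < x} := by
  set c' : ℝ := max c 1 with hc'def
  have hc1 : 1 ≤ c' := le_max_right _ _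
  set β : ℝ := (1 / (192 * c')) ^ 2 / 256 with hβdef
  have hc0 : (0:ℝ) < c' := lt_of_lt_of_le one_pos hc1
  refine ⟨β, by positivity, ?_, ?_⟩
  · have : 1 / (192 * c') ≤ 1 := by
      rw [div_le_one (by positivity)]
      nlinarith
    have h0 : 0 < 1 / (192 * c') := by positivity
    nlinarith
  intro μ hprob hint hc hmean hvar
  have hc' : (∫ x, Real.exp |x| ∂μ) ≤ c' := le_trans hc (le_max_left _ _)
  constructor
  · exact aux_key c' hc1 μ hprob hint hc' hmean hvar
  · -- apply to the pushforward under negation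
    set ν : Measure ℝ := μ.map (fun x : ℝ => -x) with hνdef
    have hmn : Measurable (fun x : ℝ => -x) := measurable_neg
    have hνprob : IsProbabilityMeasure ν := Measure.isProbabilityMeasure_map hmn.aemeasurable
    have hint_exp_cont : Continuous (fun x : ℝ => Real.exp |x|) :=
      Real.continuous_exp.comp continuous_abs
    have hνint : Integrable (fun x : ℝ => Real.exp |x|) ν := by
      rw [integrable_map_measure hint_exp_cont.aestronglyMeasurable hmn.aemeasurable]
      have : (fun x : ℝ => Real.exp |x|) ∘ (fun x : ℝ => -x) = fun x : ℝ => Real.exp |x| := by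
        funext x; simp [abs_neg]
      rw [this]; exact hint
    have hνexp : (∫ x, Real.exp |x| ∂ν) = ∫ x, Real.exp |x| ∂μ := by
      rw [hνdef, integral_map hmn.aemeasurable hint_exp_cont.aestronglyMeasurable]
      simp [abs_neg]
    have hνmean : (∫ x, x ∂ν) = 0 := by
      rw [hνdef, integral_map (φ := fun x : ℝ => -x) (f := fun x : ℝ => x) hmn.aemeasurable measurable_id'.aestronglyMeasurable]
      rw [integral_neg (f := fun x : ℝ => x)]
      simp [hmean]
    have hνvar : (∫ x, x ^ 2 ∂ν) = 1 := by
      rw [hνdef, integral_map (φ := fun x : ℝ => -x) (f := fun x : ℝ => x ^ 2)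
        hmn.aemeasurable (measurable_id'.pow_const 2).aestronglyMeasurable]
      simpa [neg_sq] using hvar
    have hkey := aux_key c' hc1 ν hνprob hνint (hνexp ▸ hc') hνmean hνvar
    have hset : ν {x : ℝ | x < -β} = μ {x : ℝ | β < x} := by
      have hms : MeasurableSet {x : ℝ | x < -β} := measurableSet_lt measurable_id' measurable_const
      rw [hνdef, Measure.map_apply hmn hms]
      congr 1
      ext x
      simp only [Set.mem_preimage, Set.mem_setOf_eq]
      constructor <;> intro h <;> linarith
    rw [← hset]
    exact hkey
end

section
/- Let (Ω, 𝒢) be a measurable space, 𝒬 a nonempty set of probability measures on Ω, Y : Ω → ℝ^d a measurable map, and V : Ω × ℝ → EReal a jointly measurable function such that V(ω, ·) is nondecreasing for every ω ∈ Ω. If for every rational x and every h ∈ ℚ^d one has sup_{p ∈ 𝒬} ∫⁻_Ω (V(ω, x + ⟨h, Y(ω)⟩))⁻ dp(ω) < ∞, then the same finiteness holds for every x ∈ ℝ and every h ∈ ℝ^d. -/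
open MeasureTheory Set
open scoped ENNReal

/-- The `[0,∞]`-valued negative part `a⁻ = max(−a,0)` of `a : EReal`. -/
noncomputable def eNeg (a : EReal) : ℝ≥0∞ := (max (-a) 0).abs

/-- A rational vector viewed as a point of `ℝ^d`. -/
def ratVec {d : ℕ} (h : Fin d → ℚ) : EuclideanSpace ℝ (Fin d) := WithLp.toLp 2 (fun i => (h i : ℝ))

lemma eNeg_antitone : Antitone eNeg := by
  intro a b hab
  unfold eNeg
  have h0 : (0 : EReal) ≤ max (-b) 0 := le_max_right _ _
  have h : max (-b) 0 ≤ max (-a) 0 := max_le_max (EReal.neg_le_neg_iff.mpr hab) le_rfl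
  set u := max (-b) 0 with hu
  set v := max (-a) 0 with hv
  clear_value u v
  induction v with
  | bot => simp [le_bot_iff.mp h] 
  | coe x =>
      induction u with
      | bot => simp at h0
      | coe y =>
          rw [EReal.abs_def, EReal.abs_def]
          exact ENNReal.ofReal_le_ofReal (by
            have hy : (0:ℝ) ≤ y := by exact_mod_cast h0
            have hxy : y ≤ x := by exact_mod_cast h
            rw [abs_of_nonneg hy, abs_of_nonneg (hy.trans hxy)]; exact hxy)
      | top => exact absurd (top_le_iff.mp h) (EReal.coe_ne_top x)
  | top => simp

lemma eNeg_measurable : Measurable eNeg := eNeg_antitone.measurable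

/-- If `V(ω,·)` is nondecreasing and
`sup_{p ∈ 𝒬} ∫⁻ (V(ω, x + ⟨h, Y ω⟩))⁻ dp < ∞` for every rational `x` and `h ∈ ℚ^d`, then the
same finiteness holds for every real `x` and every `h ∈ ℝ^d`. -/

theorem neg_part_sup_lintegral_finite_of_rat {Ω : Type*} [MeasurableSpace Ω] {d : ℕ}
    (Q : Set (Measure Ω)) (hQ : Q.Nonempty) (hQprob : ∀ p ∈ Q, IsProbabilityMeasure p)
    (Y : Ω → EuclideanSpace ℝ (Fin d)) (hY : Measurable Y)
    (V : Ω → ℝ → EReal) (hVmeas : Measurable (Function.uncurry V))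
    (hVmono : ∀ ω, Monotone (V ω))
    (hfin : ∀ x : ℚ, ∀ h : Fin d → ℚ,
      (⨆ p ∈ Q, ∫⁻ ω, eNeg (V ω ((x : ℝ) + (inner ℝ (ratVec h) (Y ω) : ℝ))) ∂p) < ⊤) :
    ∀ x : ℝ, ∀ h : EuclideanSpace ℝ (Fin d),
      (⨆ p ∈ Q, ∫⁻ ω, eNeg (V ω (x + (inner ℝ h (Y ω) : ℝ))) ∂p) < ⊤ := by
  intro x h
  set q : ℚ := ((⌊x⌋ : ℤ) : ℚ) with hq
  have hqx : (q : ℝ) ≤ x := by rw [hq]; push_cast; exact Int.floor_le x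
  -- rational corner vectors
  set hs : (Fin d → Bool) → (Fin d → ℚ) := fun s i => if s i then (⌈h i⌉ : ℤ) else (⌊h i⌋ : ℤ) with hhs
  -- the dominating functions
  set g : (Fin d → Bool) → Ω → ℝ≥0∞ := fun s ω =>
    eNeg (V ω ((q : ℝ) + (inner ℝ (ratVec (hs s)) (Y ω) : ℝ))) with hg
  have hgmeas : ∀ s, Measurable (g s) := by
    intro s
    apply eNeg_measurable.comp
    have : Measurable fun ω => (ω, (q : ℝ) + (inner ℝ (ratVec (hs s)) (Y ω) : ℝ)) := by
      apply measurable_id.prodMk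
      apply measurable_const.add
      exact ((continuous_const.inner continuous_id).measurable).comp hY
    exact hVmeas.comp this
  -- pointwise bound
  have hpt : ∀ ω, eNeg (V ω (x + (inner ℝ h (Y ω) : ℝ))) ≤ ∑ s : Fin d → Bool, g s ω := by
    intro ω
    set s₀ : Fin d → Bool := fun i => decide (Y ω i < 0) with hs₀
    have hle : (q : ℝ) + (inner ℝ (ratVec (hs s₀)) (Y ω) : ℝ)
        ≤ x + (inner ℝ h (Y ω) : ℝ) := by
      refine add_le_add hqx ?_
      rw [PiLp.inner_apply, PiLp.inner_apply]
      refine Finset.sum_le_sum fun i _ => ?_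
      simp only [RCLike.inner_apply, conj_trivial]
      by_cases hyi : Y ω i < 0
      · have : hs s₀ i = ((⌈h i⌉ : ℤ) : ℚ) := by simp [hhs, hs₀, hyi]
        simp only [ratVec]; rw [this]
        push_cast
        exact mul_le_mul_of_nonpos_left (Int.le_ceil _) hyi.le
      · have : hs s₀ i = ((⌊h i⌋ : ℤ) : ℚ) := by simp [hhs, hs₀, hyi]
        simp only [ratVec]; rw [this]
        push_cast
        exact mul_le_mul_of_nonneg_left (Int.floor_le _) (not_lt.mp hyi)
    calc eNeg (V ω (x + (inner ℝ h (Y ω) : ℝ))) ≤ g s₀ ω :=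
          eNeg_antitone (hVmono ω hle)
      _ ≤ ∑ s : Fin d → Bool, g s ω :=
          Finset.single_le_sum (f := fun s => g s ω) (fun _ _ => zero_le) (Finset.mem_univ s₀)
  refine lt_of_le_of_lt (iSup₂_le fun p hp => ?_) (?_ :
    (∑ s : Fin d → Bool, ⨆ p ∈ Q, ∫⁻ ω, g s ω ∂p) < ⊤)
  · calc ∫⁻ ω, eNeg (V ω (x + (inner ℝ h (Y ω) : ℝ))) ∂p
        ≤ ∫⁻ ω, ∑ s : Fin d → Bool, g s ω ∂p := lintegral_mono hpt
      _ = ∑ s : Fin d → Bool, ∫⁻ ω, g s ω ∂p :=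
          lintegral_finset_sum _ (fun s _ => hgmeas s)
      _ ≤ ∑ s : Fin d → Bool, ⨆ p ∈ Q, ∫⁻ ω, g s ω ∂p :=
          Finset.sum_le_sum fun s _ => le_biSup (f := fun p => ∫⁻ ω, g s ω ∂p) hp
  · exact ENNReal.sum_lt_top.mpr fun s _ => hfin q (hs s)
end

section
/- Let X and Y be Polish spaces equipped with their Borel σ-algebras, let q be a Markov kernel from X to Y, and let f : X × Y → EReal be lower semianalytic, meaning that {z ∈ X × Y : f(z) ≤ a} is an analytic set for every a ∈ ℝ. Define λ : X → EReal by λ(x) := I_{q(x)}(f(x, ·)). Then λ is lower semianalytic: {x ∈ X : λ(x) ≤ a} is an analytic subset of X for every a ∈ ℝ. -/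
open MeasureTheory ProbabilityTheory
open scoped ENNReal

/-- The `[0,∞]`-valued positive part `a⁺ = max(a,0)` of `a : EReal`. -/
noncomputable def ePos (a : EReal) : ℝ≥0∞ := (max a 0).abs

/-- The `(−∞)`-integral `I_p(f) := (∫⁻ f⁺ dp) − (∫⁻ f⁻ dp)` computed in `EReal`; note that
`EReal` subtraction satisfies `⊤ - ⊤ = ⊥`, which implements the stipulation
`I_p(f) = −∞` when both integrals are infinite. -/
noncomputable def Iminus {Ω : Type*} [MeasurableSpace Ω] (p : Measure Ω)
    (f : Ω → EReal) : EReal :=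
  ((∫⁻ ω, ePos (f ω) ∂p : ℝ≥0∞) : EReal) - ((∫⁻ ω, eNeg (f ω) ∂p : ℝ≥0∞) : EReal)

namespace LSA
open Set Filter Topology


/-- The set of sequences obeying the finite list of bounds `l`. -/
def cyl (l : List ℕ) : Set (ℕ → ℕ) := {σ | ∀ i, i < l.length → σ i ≤ l.getD i 0}

/-- The compact box of sequences bounded by `ν`. -/
def box (ν : ℕ → ℕ) : Set (ℕ → ℕ) := {σ | ∀ i, σ i ≤ ν i}

lemma cyl_nil : cyl [] = univ := by ext σ; simp [cyl]

lemma mem_cyl_ofFn {ν : ℕ → ℕ} {k : ℕ} {σ : ℕ → ℕ} :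
    σ ∈ cyl (List.ofFn fun i : Fin k => ν i) ↔ ∀ i < k, σ i ≤ ν i := by
  constructor
  · intro h i hi
    have := h i (by simpa using hi)
    rwa [List.getD_eq_getElem _ _ (by simpa using hi), List.getElem_ofFn] at this
  · intro h i hi
    rw [List.length_ofFn] at hi
    rw [List.getD_eq_getElem _ _ (by simpa using hi), List.getElem_ofFn]
    exact h i hi

lemma cyl_append (l : List ℕ) (n : ℕ) :
    cyl (l ++ [n]) = {σ ∈ cyl l | σ l.length ≤ n} := by
  ext σ
  simp only [cyl, mem_setOf_eq, List.length_append, List.length_singleton, mem_sep_iff]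
  constructor
  · intro h
    refine ⟨fun i hi => ?_, ?_⟩
    · have := h i (by omega)
      rwa [List.getD_append _ _ _ _ hi] at this
    · have := h l.length (by omega)
      rwa [List.getD_append_right _ _ _ _ le_rfl, Nat.sub_self] at this
  · rintro ⟨h1, h2⟩ i hi
    rcases lt_or_ge i l.length with hil | hil
    · rw [List.getD_append _ _ _ _ hil]; exact h1 i hil
    · have : i = l.length := by omega
      subst this
      rwa [List.getD_append_right _ _ _ _ le_rfl, Nat.sub_self]

lemma iUnion_cyl_append (l : List ℕ) : ⋃ n, cyl (l ++ [n]) = cyl l := by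
  ext σ
  simp only [mem_iUnion, cyl_append, mem_sep_iff]
  exact ⟨fun ⟨n, h, _⟩ => h, fun h => ⟨σ l.length, h, le_rfl⟩⟩

lemma monotone_cyl_append (l : List ℕ) : Monotone fun n => cyl (l ++ [n]) := by
  intro m n hmn σ hσ
  have h1 : σ ∈ cyl (l ++ [m]) := hσ
  rw [cyl_append] at h1
  show σ ∈ cyl (l ++ [n])
  rw [cyl_append]
  exact ⟨h1.1, h1.2.trans hmn⟩

/-- Dependent choice along lists. -/
lemma exists_seq_of_lists (P : List ℕ → Prop) (h0 : P [])
    (hstep : ∀ l, P l → ∃ n, P (l ++ [n])) :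
    ∃ ν : ℕ → ℕ, ∀ k, P (List.ofFn fun i : Fin k => ν i) := by
  classical
  let L : ∀ k : ℕ, {l : List ℕ // l.length = k ∧ P l} := fun k =>
    Nat.rec ⟨[], rfl, h0⟩
      (fun _ ih => ⟨ih.1 ++ [Classical.choose (hstep ih.1 ih.2.2)],
        by simp [ih.2.1], Classical.choose_spec (hstep ih.1 ih.2.2)⟩) k
  refine ⟨fun i => (L (i+1)).1.getD i 0, fun k => ?_⟩
  have key : ∀ k, (L k).1 = List.ofFn fun i : Fin k => (L (i+1)).1.getD i 0 := by
    intro k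
    induction k with
    | zero => rfl
    | succ k ih =>
      have hL : (L (k+1)).1 = (L k).1 ++ [Classical.choose (hstep (L k).1 (L k).2.2)] := rfl
      have hlast : (L (k+1)).1.getD k 0 = Classical.choose (hstep (L k).1 (L k).2.2) := by
        rw [hL, List.getD_append_right _ _ _ _ (by rw [(L k).2.1])]
        simp [(L k).2.1]
      rw [List.ofFn_succ', List.concat_eq_append, hL]
      congr 1
      · show _ = [(L (k+1)).1.getD k 0]
        rw [hlast]
  rw [← key k]
  exact (L k).2.2

lemma isCompact_box (ν : ℕ → ℕ) : IsCompact (box ν) := by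
  have : box ν = Set.pi univ fun i => Iic (ν i) := by
    ext σ; simp [box, Set.pi]
  rw [this]
  exact isCompact_univ_pi fun i => (Set.finite_Iic (ν i)).isCompact

lemma box_subset_cyl (ν : ℕ → ℕ) (k : ℕ) :
    box ν ⊆ cyl (List.ofFn fun i : Fin k => ν i) :=
  fun σ hσ => mem_cyl_ofFn.2 fun i _ => hσ i

/-- The geometric core: the intersection of the closures of the images of the cylinders
is contained in the image of the compact box. -/
lemma iInter_closure_subset {α : Type*} [MetricSpace α] {g : (ℕ → ℕ) → α}
    (hg : Continuous g) (ν : ℕ → ℕ) :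
    (⋂ k, closure (g '' cyl (List.ofFn fun i : Fin k => ν i))) ⊆ g '' box ν := by
  intro z hz
  have H : ∀ k : ℕ, ∃ σ, (∀ i < k, σ i ≤ ν i) ∧ dist (g σ) z < 1 / (k+1) := by
    intro k
    have h1 := mem_iInter.1 hz k
    rcases Metric.mem_closure_iff.1 h1 (1/(k+1)) (by positivity) with ⟨y, hy, hdy⟩
    rcases hy with ⟨σ, hσ, rfl⟩
    exact ⟨σ, mem_cyl_ofFn.1 hσ, by rwa [dist_comm]⟩
  choose σ hσ hd using H
  set τ : ℕ → (ℕ → ℕ) := fun k i => if i < k then σ k i else 0 with hτ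
  have hτbox : ∀ k, τ k ∈ box ν := by
    intro k i
    dsimp [τ]
    split
    · exact hσ k i (by assumption)
    · exact Nat.zero_le _
  obtain ⟨σs, hσsbox, φ, hφ, hconv⟩ := (isCompact_box ν).tendsto_subseq hτbox
  have hσconv : Tendsto (fun j => σ (φ j)) atTop (𝓝 σs) := by
    rw [tendsto_pi_nhds]
    intro i
    have h1 : Tendsto (fun j => τ (φ j) i) atTop (𝓝 (σs i)) :=
      ((continuous_apply i).continuousAt.tendsto).comp hconv
    refine h1.congr' ?_
    filter_upwards [eventually_gt_atTop i] with j hj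
    have : i < φ j := lt_of_lt_of_le hj (hφ.le_apply)
    simp [τ, this]
  have h2 : Tendsto (fun j => g (σ (φ j))) atTop (𝓝 (g σs)) :=
    (hg.continuousAt.tendsto).comp hσconv
  have h3 : Tendsto (fun j => g (σ (φ j))) atTop (𝓝 z) := by
    rw [tendsto_iff_dist_tendsto_zero]
    have hb : ∀ j, dist (g (σ (φ j))) z ≤ 1 / (j+1) := by
      intro j
      refine le_trans (hd (φ j)).le ?_
      apply one_div_le_one_div_of_le (by positivity)
      exact_mod_cast Nat.succ_le_succ hφ.le_apply
    refine squeeze_zero (fun j => dist_nonneg) hb tendsto_one_div_add_atTop_nhds_zero_nat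
  have : g σs = z := tendsto_nhds_unique h2 h3
  exact ⟨σs, hσsbox, this⟩

lemma antitone_cyl_ofFn (ν : ℕ → ℕ) :
    Antitone fun k => cyl (List.ofFn fun i : Fin k => ν i) := by
  intro k k' hkk' σ hσ
  exact mem_cyl_ofFn.2 fun i hi => mem_cyl_ofFn.1 hσ i (lt_of_lt_of_le hi hkk')

section SingleMeasure
variable {Y : Type*} [TopologicalSpace Y] [PolishSpace Y] [MeasurableSpace Y] [BorelSpace Y]

lemma analytic_inner_compact {A : Set Y} (hA : AnalyticSet A) (μ : Measure Y)
    [IsFiniteMeasure μ] {c : ℝ≥0∞} (hc : c < μ A) :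
    ∃ K, IsCompact K ∧ K ⊆ A ∧ c ≤ μ K := by
  rw [AnalyticSet] at hA
  rcases hA with rfl | ⟨g, hg, rfl⟩
  · simp at hc
  letI := TopologicalSpace.upgradeIsCompletelyMetrizable Y
  have h0 : c < μ (g '' cyl []) := by rwa [cyl_nil, image_univ]
  have hstep : ∀ l, c < μ (g '' cyl l) → ∃ n, c < μ (g '' cyl (l ++ [n])) := by
    intro l hl
    have hmono : Monotone fun n => g '' cyl (l ++ [n]) :=
      fun m n hmn => image_mono (monotone_cyl_append l hmn)
    have hU : (⋃ n, g '' cyl (l ++ [n])) = g '' cyl l := by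
      rw [← image_iUnion, iUnion_cyl_append]
    have := hmono.measure_iUnion (μ := μ)
    rw [hU] at this
    rw [this] at hl
    exact lt_iSup_iff.1 hl
  obtain ⟨ν, hν⟩ := exists_seq_of_lists _ h0 hstep
  refine ⟨g '' box ν, (isCompact_box ν).image hg, image_subset_range _ _, ?_⟩
  have hsub := iInter_closure_subset hg ν
  refine le_trans ?_ (measure_mono hsub)
  have heq : μ (⋂ k, closure (g '' cyl (List.ofFn fun i : Fin k => ν i)))
      = ⨅ k, μ (closure (g '' cyl (List.ofFn fun i : Fin k => ν i))) := by
    refine Antitone.measure_iInter ?_ ?_ ?_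
    · intro k k' h; exact closure_mono (image_mono (antitone_cyl_ofFn ν h))
    · exact fun k => isClosed_closure.measurableSet.nullMeasurableSet
    · exact ⟨0, measure_ne_top μ _⟩
  rw [heq]
  exact le_iInf fun k => le_trans (hν k).le (measure_mono (subset_closure))

lemma analytic_nullMeasurableSet {A : Set Y} (hA : AnalyticSet A) (μ : Measure Y)
    [IsFiniteMeasure μ] : NullMeasurableSet A μ := by
  rcases eq_or_ne (μ A) 0 with h0 | h0
  · exact NullMeasurableSet.of_null h0
  have hK : ∀ n : ℕ, ∃ K, IsCompact K ∧ K ⊆ A ∧ μ A - ((n : ℝ≥0∞)+1)⁻¹ ≤ μ K := by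
    intro n
    refine analytic_inner_compact hA μ ?_
    exact ENNReal.sub_lt_self (measure_ne_top μ _) h0 (by simp)
  choose K hKc hKA hKμ using hK
  set S := ⋃ n, K n with hS
  have hSm : MeasurableSet S := MeasurableSet.iUnion fun n => (hKc n).measurableSet
  have hSA : S ⊆ A := iUnion_subset hKA
  have hμS : μ A ≤ μ S := by
    refine ENNReal.le_of_forall_pos_le_add fun ε hε _ => ?_
    obtain ⟨n, hn⟩ := ENNReal.exists_inv_nat_lt (ENNReal.coe_ne_zero.2 hε.ne')
    have h1 : μ A - ((n : ℝ≥0∞)+1)⁻¹ ≤ μ S := le_trans (hKμ n) (measure_mono (subset_iUnion K n))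
    have h2 : μ A ≤ μ S + ((n : ℝ≥0∞)+1)⁻¹ := tsub_le_iff_right.1 h1
    refine h2.trans (add_le_add_right ?_ _)
    refine le_trans ?_ hn.le
    exact ENNReal.inv_le_inv.2 (by simp)
  have hnull : μ (A \ S) = 0 := by
    have hT : A ⊆ toMeasurable μ A := subset_toMeasurable μ A
    have h1 : A \ S ⊆ toMeasurable μ A \ S := diff_subset_diff_left hT
    refine measure_mono_null h1 ?_
    rw [measure_diff (hSA.trans hT) hSm.nullMeasurableSet (measure_ne_top μ _)]
    rw [measure_toMeasurable]
    exact tsub_eq_zero_of_le hμS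
  have : A = S ∪ (A \ S) := (union_diff_cancel hSA).symm
  rw [this]
  exact hSm.nullMeasurableSet.union (NullMeasurableSet.of_null hnull)

end SingleMeasure

section KernelCore
variable {X Y : Type}
  [TopologicalSpace X] [PolishSpace X] [MeasurableSpace X] [BorelSpace X]
  [TopologicalSpace Y] [PolishSpace Y] [MeasurableSpace Y] [BorelSpace Y]

lemma kernel_analytic_usa {A : Set (X × Y)} (hA : AnalyticSet A)
    (q : Kernel X Y) [IsMarkovKernel q] (d : ℝ≥0∞) :
    AnalyticSet {x : X | d ≤ q x (Prod.mk x ⁻¹' A)} := by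
  rcases eq_or_ne d 0 with rfl | hd0
  · have : {x : X | (0:ℝ≥0∞) ≤ q x (Prod.mk x ⁻¹' A)} = univ := by
      ext x; simp
    rw [this]; exact MeasurableSet.univ.analyticSet
  rcases eq_or_ne d ∞ with rfl | hdtop
  · have : {x : X | (∞:ℝ≥0∞) ≤ q x (Prod.mk x ⁻¹' A)} = ∅ := by
      ext x
      simp only [mem_setOf_eq, top_le_iff, mem_empty_iff_false, iff_false]
      exact measure_ne_top _ _
    rw [this]; exact analyticSet_empty
  rw [AnalyticSet] at hA
  rcases hA with rfl | ⟨g, hg, rfl⟩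
  · have : {x : X | d ≤ q x (Prod.mk x ⁻¹' (∅ : Set (X × Y)))} = ∅ := by
      ext x
      simp only [preimage_empty, measure_empty, mem_setOf_eq, nonpos_iff_eq_zero,
        le_zero_iff, mem_empty_iff_false, iff_false]
      exact hd0
    rw [this]; exact analyticSet_empty
  letI := TopologicalSpace.upgradeIsCompletelyMetrizable (X × Y)
  set c : ℕ → ℝ≥0∞ := fun j => d - ((j:ℝ≥0∞)+1)⁻¹ with hc
  have hcd : ∀ j, c j < d := fun j => ENNReal.sub_lt_self hdtop hd0 (by simp)
  set h : List ℕ → X → ℝ≥0∞ := fun l x => q x (Prod.mk x ⁻¹' closure (g '' cyl l)) with hh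
  have hmeas : ∀ l, Measurable (h l) := fun l =>
    Kernel.measurable_kernel_prodMk_left isClosed_closure.measurableSet
  set E : ℕ → Set (X × (ℕ → ℕ)) :=
    fun j => {p | ∀ k, c j < h (List.ofFn fun i : Fin k => p.2 i) p.1} with hE
  have hEm : ∀ j, MeasurableSet (E j) := by
    intro j
    have : E j = ⋂ k, ⋃ (l : List ℕ), ⋃ (_ : l.length = k),
        ({x : X | c j < h l x} ×ˢ {ν : ℕ → ℕ | (List.ofFn fun i : Fin k => ν i) = l}) := by
      ext ⟨x, ν⟩
      simp only [hE, mem_setOf_eq, mem_iInter, mem_iUnion, mem_prod]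
      constructor
      · intro hp k
        exact ⟨List.ofFn fun i : Fin k => ν i, by simp, hp k, rfl⟩
      · rintro hp k
        obtain ⟨l, hlen, hx, hl⟩ := hp k
        rwa [← hl] at hx
    rw [this]
    refine MeasurableSet.iInter fun k => MeasurableSet.iUnion fun l =>
      MeasurableSet.iUnion fun hlen => ?_
    refine MeasurableSet.prod (measurableSet_lt measurable_const (hmeas l)) ?_
    have : {ν : ℕ → ℕ | (List.ofFn fun i : Fin k => ν i) = l}
        = ⋂ i : Fin k, (fun ν : ℕ → ℕ => ν i) ⁻¹' {l.getD i 0} := by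
      ext ν
      simp only [mem_setOf_eq, mem_iInter, mem_preimage, mem_singleton_iff]
      constructor
      · rintro rfl i
        rw [List.getD_eq_getElem _ _ (by simpa using i.isLt), List.getElem_ofFn]
      · intro hi
        refine List.ext_getElem (by simpa using hlen.symm) fun i h1 h2 => ?_
        have hik : i < k := by simpa using h1
        rw [List.getElem_ofFn]
        have := hi ⟨i, hik⟩
        rwa [List.getD_eq_getElem _ _ h2] at this
    rw [this]
    exact MeasurableSet.iInter fun i => measurable_pi_apply _ (measurableSet_singleton _)
  have main : {x : X | d ≤ q x (Prod.mk x ⁻¹' range g)} = ⋂ j, Prod.fst '' E j := by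
    ext x
    simp only [mem_setOf_eq, mem_iInter]
    constructor
    · intro hx j
      have h0 : c j < q x (Prod.mk x ⁻¹' (g '' cyl [])) := by
        rw [cyl_nil, image_univ]
        exact lt_of_lt_of_le (hcd j) hx
      have hstep : ∀ l, c j < q x (Prod.mk x ⁻¹' (g '' cyl l)) →
          ∃ n, c j < q x (Prod.mk x ⁻¹' (g '' cyl (l ++ [n]))) := by
        intro l hl
        have hmono : Monotone fun n => Prod.mk x ⁻¹' (g '' cyl (l ++ [n])) :=
          fun m n hmn => preimage_mono (image_mono (monotone_cyl_append l hmn))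
        have hU : (⋃ n, Prod.mk x ⁻¹' (g '' cyl (l ++ [n]))) = Prod.mk x ⁻¹' (g '' cyl l) := by
          rw [← preimage_iUnion, ← image_iUnion, iUnion_cyl_append]
        have := hmono.measure_iUnion (μ := q x)
        rw [hU] at this
        rw [this] at hl
        exact lt_iSup_iff.1 hl
      obtain ⟨ν, hν⟩ := exists_seq_of_lists _ h0 hstep
      refine ⟨(x, ν), fun k => ?_, rfl⟩
      exact lt_of_lt_of_le (hν k)
        (measure_mono (preimage_mono (subset_closure)))
    · intro hx
      refine ENNReal.le_of_forall_pos_le_add fun ε hε _ => ?_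
      obtain ⟨m, hm⟩ := ENNReal.exists_inv_nat_lt (ENNReal.coe_ne_zero.2 hε.ne')
      obtain ⟨⟨x', ν⟩, hp, hfst⟩ := hx m
      cases hfst
      have key : c m ≤ q x' (Prod.mk x' ⁻¹' range g) := by
        have heq : q x' (⋂ k, Prod.mk x' ⁻¹' closure (g '' cyl (List.ofFn fun i : Fin k => ν i)))
            = ⨅ k, q x' (Prod.mk x' ⁻¹' closure (g '' cyl (List.ofFn fun i : Fin k => ν i))) := by
          refine Antitone.measure_iInter ?_ ?_ ?_
          · intro k k' hkk'
            exact preimage_mono (closure_mono (image_mono (antitone_cyl_ofFn ν hkk')))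
          · exact fun k => (IsClosed.preimage (Continuous.prodMk_right x') isClosed_closure
              |>.measurableSet.nullMeasurableSet)
          · exact ⟨0, measure_ne_top _ _⟩
        have hsub : (⋂ k, Prod.mk x' ⁻¹' closure (g '' cyl (List.ofFn fun i : Fin k => ν i)))
            ⊆ Prod.mk x' ⁻¹' range g := by
          rw [← preimage_iInter]
          refine preimage_mono ?_
          exact (iInter_closure_subset hg ν).trans (image_subset_range _ _)
        refine le_trans ?_ (measure_mono hsub)
        rw [heq]
        exact le_iInf fun k => (hp k).le
      have h2 : d ≤ q x' (Prod.mk x' ⁻¹' range g) + ((m : ℝ≥0∞)+1)⁻¹ :=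
        tsub_le_iff_right.1 key
      refine h2.trans (add_le_add_right ?_ _)
      refine le_trans ?_ hm.le
      exact ENNReal.inv_le_inv.2 (by simp)
  rw [main]
  refine AnalyticSet.iInter fun j => ?_
  exact (hEm j).analyticSet_image measurable_fst

end KernelCore


/-- helper: `a ≤ b` follows from `a ≤ b + 1/(m+1)` for all `m`. -/
lemma le_of_forall_le_add_inv {a b : ℝ≥0∞} (h : ∀ m : ℕ, a ≤ b + ((m:ℝ≥0∞)+1)⁻¹) : a ≤ b := by
  refine ENNReal.le_of_forall_pos_le_add fun ε hε _ => ?_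
  obtain ⟨m, hm⟩ := ENNReal.exists_inv_nat_lt (ENNReal.coe_ne_zero.2 hε.ne')
  refine (h m).trans (add_le_add_right ?_ _)
  refine le_trans ?_ hm.le
  exact ENNReal.inv_le_inv.2 (by simp)

/-- helper: rational approximation from above. -/
lemma exists_rat_btwn' {y : ℝ≥0∞} (hy : y ≠ ∞) (m : ℕ) :
    ∃ r : ℚ, y ≤ ENNReal.ofReal r ∧ ENNReal.ofReal r ≤ y + ((m:ℝ≥0∞)+1)⁻¹ := by
  have hlt : y < y + ((m:ℝ≥0∞)+1)⁻¹ := ENNReal.lt_add_right hy (by simp)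
  obtain ⟨r, hr0, hr1, hr2⟩ := ENNReal.lt_iff_exists_rat_btwn.1 hlt
  exact ⟨r, le_of_lt hr1, le_of_lt hr2⟩

/-- helper: rational approximation from below. -/
lemma exists_rat_below {y : ℝ≥0∞} (hy : y ≠ ∞) (m : ℕ) :
    ∃ r : ℚ, ENNReal.ofReal r ≤ y ∧ y ≤ ENNReal.ofReal r + ((m:ℝ≥0∞)+1)⁻¹ := by
  rcases eq_or_ne y 0 with rfl | hy0
  · exact ⟨0, by simp, by simp⟩
  have hlt : y - ((m:ℝ≥0∞)+1)⁻¹ < y := ENNReal.sub_lt_self hy hy0 (by simp)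
  obtain ⟨r, hr0, hr1, hr2⟩ := ENNReal.lt_iff_exists_rat_btwn.1 hlt
  refine ⟨r, le_of_lt hr2, ?_⟩
  rw [← tsub_le_iff_right]
  exact le_of_lt hr1

lemma AnalyticSet.union' {α : Type*} [TopologicalSpace α] {s t : Set α}
    (hs : AnalyticSet s) (ht : AnalyticSet t) : AnalyticSet (s ∪ t) := by
  have : s ∪ t = ⋃ b : Bool, (if b then s else t) := by
    ext x; simp only [mem_union, mem_iUnion]
    constructor
    · rintro (h | h); exacts [⟨true, by simpa⟩, ⟨false, by simpa⟩]
    · rintro ⟨b, h⟩; cases b <;> simp_all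
  rw [this]
  exact AnalyticSet.iUnion fun b => by cases b <;> simpa

lemma AnalyticSet.inter' {α : Type*} [TopologicalSpace α] [T2Space α] {s t : Set α}
    (hs : AnalyticSet s) (ht : AnalyticSet t) : AnalyticSet (s ∩ t) := by
  have : s ∩ t = ⋂ b : Bool, (if b then s else t) := by
    ext x; simp only [mem_inter_iff, mem_iInter]
    constructor
    · rintro ⟨h1, h2⟩ b; cases b <;> simpa
    · intro h; exact ⟨by simpa using h true, by simpa using h false⟩
  rw [this]
  exact AnalyticSet.iInter fun b => by cases b <;> simpa

section Classes
variable {X : Type} [TopologicalSpace X] [PolishSpace X] [MeasurableSpace X] [BorelSpace X]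

lemma analyticSet_univ : AnalyticSet (univ : Set X) := MeasurableSet.univ.analyticSet

/-- `h` is "upper semianalytic-like": all upper level sets are analytic. -/
def IsUSA (h : X → ℝ≥0∞) : Prop := ∀ d : ℝ≥0∞, AnalyticSet {x | d ≤ h x}

/-- `h` is "lower semianalytic-like": all lower level sets are analytic. -/
def IsLSA (h : X → ℝ≥0∞) : Prop := ∀ c : ℝ≥0∞, AnalyticSet {x | h x ≤ c}

lemma isUSA_const {c : ℝ≥0∞} : IsUSA (fun _ : X => c) := by
  intro d
  by_cases h : d ≤ c
  · have : {x : X | d ≤ c} = univ := by ext x; simp [h]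
    rw [this]; exact analyticSet_univ
  · have : {x : X | d ≤ c} = ∅ := by ext x; simp [h]
    rw [this]; exact analyticSet_empty

lemma isLSA_const {c : ℝ≥0∞} : IsLSA (fun _ : X => c) := by
  intro d
  by_cases h : c ≤ d
  · have : {x : X | c ≤ d} = univ := by ext x; simp [h]
    rw [this]; exact analyticSet_univ
  · have : {x : X | c ≤ d} = ∅ := by ext x; simp [h]
    rw [this]; exact analyticSet_empty

lemma IsUSA.add {f g : X → ℝ≥0∞} (hf : IsUSA f) (hg : IsUSA g) :
    IsUSA (fun x => f x + g x) := by
  intro d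
  rcases eq_or_ne d 0 with rfl | hd0
  · have : {x : X | (0:ℝ≥0∞) ≤ f x + g x} = univ := by ext x; simp
    rw [this]; exact analyticSet_univ
  rcases eq_or_ne d ∞ with rfl | hdtop
  · have : {x : X | ∞ ≤ f x + g x} = {x | ∞ ≤ f x} ∪ {x | ∞ ≤ g x} := by
      ext x
      simp only [mem_setOf_eq, top_le_iff, mem_union, ENNReal.add_eq_top]
    rw [this]; exact AnalyticSet.union' (hf ∞) (hg ∞)
  have : {x : X | d ≤ f x + g x} = ⋂ m : ℕ, ⋃ r : ℚ,
      ({x | ENNReal.ofReal r ≤ f x} ∩ {x | d - ENNReal.ofReal r - ((m:ℝ≥0∞)+1)⁻¹ ≤ g x}) := by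
    ext x
    simp only [mem_setOf_eq, mem_iInter, mem_iUnion, mem_inter_iff]
    constructor
    · intro hx m
      rcases eq_or_ne (f x) ∞ with hfx | hfx
      · obtain ⟨r, hr1, _⟩ := exists_rat_btwn' hdtop 0
        refine ⟨r, by rw [hfx]; exact le_top, ?_⟩
        have h2 : d - ENNReal.ofReal r = 0 := tsub_eq_zero_of_le hr1
        rw [h2, zero_tsub]
        exact zero_le
      · obtain ⟨r, hr1, hr2⟩ := exists_rat_below hfx m
        refine ⟨r, hr1, ?_⟩
        have h1 : d - f x ≤ g x := tsub_le_iff_left.2 hx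
        refine le_trans ?_ h1
        rw [tsub_tsub]
        exact tsub_le_tsub_left hr2 d
    · intro hx
      refine le_of_forall_le_add_inv fun m => ?_
      obtain ⟨r, hr1, hr2⟩ := hx m
      have h1 : d ≤ g x + ((m:ℝ≥0∞)+1)⁻¹ + ENNReal.ofReal r := by
        rw [← tsub_le_iff_right, ← tsub_le_iff_right]
        exact hr2
      calc d ≤ g x + ((m:ℝ≥0∞)+1)⁻¹ + ENNReal.ofReal r := h1
        _ ≤ g x + ((m:ℝ≥0∞)+1)⁻¹ + f x := by gcongr
        _ = f x + g x + ((m:ℝ≥0∞)+1)⁻¹ := by ring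
  rw [this]
  exact AnalyticSet.iInter fun m => AnalyticSet.iUnion fun r =>
    AnalyticSet.inter' (hf _) (hg _)

lemma IsUSA.const_mul {f : X → ℝ≥0∞} (hf : IsUSA f) {c : ℝ≥0∞} (hc0 : c ≠ 0) (hct : c ≠ ∞) :
    IsUSA (fun x => c * f x) := by
  intro d
  have : {x : X | d ≤ c * f x} = {x | d / c ≤ f x} := by
    ext x
    simp only [mem_setOf_eq]
    rw [ENNReal.div_le_iff_le_mul (Or.inl hc0) (Or.inl hct), mul_comm]
  rw [this]
  exact hf _

lemma IsUSA.finsetSum {ι : Type*} {f : ι → X → ℝ≥0∞} (s : Finset ι)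
    (hf : ∀ i ∈ s, IsUSA (f i)) : IsUSA (fun x => ∑ i ∈ s, f i x) := by
  classical
  induction s using Finset.induction_on with
  | empty => simpa using isUSA_const
  | insert i s' hnotmem ih =>
    have h1 : IsUSA (fun x => f i x + ∑ j ∈ s', f j x) :=
      (hf i (Finset.mem_insert_self i s')).add
        (ih fun j hj => hf j (Finset.mem_insert_of_mem hj))
    intro d
    have : {x : X | d ≤ ∑ j ∈ insert i s', f j x}
        = {x | d ≤ f i x + ∑ j ∈ s', f j x} := by
      ext x; simp [Finset.sum_insert hnotmem]
    rw [this]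
    exact h1 d

lemma IsUSA.iSup {f : ℕ → X → ℝ≥0∞} (hf : ∀ n, IsUSA (f n)) :
    IsUSA (fun x => ⨆ n, f n x) := by
  intro d
  rcases eq_or_ne d 0 with rfl | hd0
  · have : {x : X | (0:ℝ≥0∞) ≤ ⨆ n, f n x} = univ := by ext x; simp
    rw [this]; exact analyticSet_univ
  rcases eq_or_ne d ∞ with rfl | hdtop
  · have : {x : X | ∞ ≤ ⨆ n, f n x} = ⋂ K : ℕ, ⋃ n, {x | (K:ℝ≥0∞) ≤ f n x} := by
      ext x
      simp only [mem_setOf_eq, top_le_iff, mem_iInter, mem_iUnion]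
      constructor
      · intro hx K
        have : (K:ℝ≥0∞) < ⨆ n, f n x := by rw [hx]; exact ENNReal.natCast_lt_top K
        obtain ⟨n, hn⟩ := lt_iSup_iff.1 this
        exact ⟨n, hn.le⟩
      · intro hx
        by_contra hne
        obtain ⟨K, hK⟩ := ENNReal.exists_nat_gt hne
        obtain ⟨n, hn⟩ := hx K
        exact absurd (hn.trans (le_iSup (fun n => f n x) n)) (not_le.2 hK)
    rw [this]
    exact AnalyticSet.iInter fun K => AnalyticSet.iUnion fun n => hf n _
  have : {x : X | d ≤ ⨆ n, f n x} = ⋂ m : ℕ, ⋃ n,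
      {x | d - ((m:ℝ≥0∞)+1)⁻¹ ≤ f n x} := by
    ext x
    simp only [mem_setOf_eq, mem_iInter, mem_iUnion]
    constructor
    · intro hx m
      have hlt : d - ((m:ℝ≥0∞)+1)⁻¹ < ⨆ n, f n x :=
        lt_of_lt_of_le (ENNReal.sub_lt_self hdtop hd0 (by simp)) hx
      obtain ⟨n, hn⟩ := lt_iSup_iff.1 hlt
      exact ⟨n, hn.le⟩
    · intro hx
      refine le_of_forall_le_add_inv fun m => ?_
      obtain ⟨n, hn⟩ := hx m
      rw [← tsub_le_iff_right]
      exact hn.trans (le_iSup (fun n => f n x) n)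
  rw [this]
  exact AnalyticSet.iInter fun m => AnalyticSet.iUnion fun n => hf n _

lemma IsLSA.iSup {f : ℕ → X → ℝ≥0∞} (hf : ∀ n, IsLSA (f n)) :
    IsLSA (fun x => ⨆ n, f n x) := by
  intro c
  have : {x : X | (⨆ n, f n x) ≤ c} = ⋂ n, {x | f n x ≤ c} := by
    ext x; simp [iSup_le_iff]
  rw [this]
  exact AnalyticSet.iInter fun n => hf n _

lemma IsLSA.const_mul {f : X → ℝ≥0∞} (hf : IsLSA f) {c : ℝ≥0∞} (hc0 : c ≠ 0) (hct : c ≠ ∞) :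
    IsLSA (fun x => c * f x) := by
  intro d
  have : {x : X | c * f x ≤ d} = {x | f x ≤ d / c} := by
    ext x
    simp only [mem_setOf_eq]
    rw [ENNReal.le_div_iff_mul_le (Or.inl hc0) (Or.inl hct), mul_comm]
  rw [this]
  exact hf _

lemma IsLSA.add {f g : X → ℝ≥0∞} (hf : IsLSA f) (hg : IsLSA g) :
    IsLSA (fun x => f x + g x) := by
  intro c
  rcases eq_or_ne c ∞ with rfl | hctop
  · have : {x : X | f x + g x ≤ ∞} = univ := by ext x; simp
    rw [this]; exact analyticSet_univ
  have : {x : X | f x + g x ≤ c} = ⋂ m : ℕ, ⋃ r : ℚ,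
      ⋃ (_ : ENNReal.ofReal r ≤ c + ((m:ℝ≥0∞)+1)⁻¹),
      ({x | f x ≤ ENNReal.ofReal r} ∩
        {x | g x ≤ (c + ((m:ℝ≥0∞)+1)⁻¹) - ENNReal.ofReal r}) := by
    ext x
    simp only [mem_setOf_eq, mem_iInter, mem_iUnion, mem_inter_iff]
    constructor
    · intro hx m
      have hfc : f x ≤ c := le_trans (le_add_right le_rfl) hx
      have hfx : f x ≠ ∞ := fun h => hctop (top_le_iff.1 (h ▸ hfc))
      obtain ⟨r, hr1, hr2⟩ := exists_rat_btwn' hfx m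
      refine ⟨r, hr2.trans (by gcongr), hr1, ?_⟩
      have h1 : g x ≤ c - f x := ENNReal.le_sub_of_add_le_left hfx hx
      refine h1.trans ?_
      calc c - f x = (c + ((m:ℝ≥0∞)+1)⁻¹) - (f x + ((m:ℝ≥0∞)+1)⁻¹) := by
            rw [← tsub_tsub, tsub_right_comm,
              ENNReal.add_sub_cancel_right (by simp : ((m:ℝ≥0∞)+1)⁻¹ ≠ ∞)]
        _ ≤ (c + ((m:ℝ≥0∞)+1)⁻¹) - ENNReal.ofReal r := tsub_le_tsub_left hr2 _
    · intro hx
      refine le_of_forall_le_add_inv fun m => ?_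
      obtain ⟨r, hrc, hr1, hr2⟩ := hx m
      calc f x + g x ≤ ENNReal.ofReal r + ((c + ((m:ℝ≥0∞)+1)⁻¹) - ENNReal.ofReal r) := by
            gcongr
        _ = c + ((m:ℝ≥0∞)+1)⁻¹ := add_tsub_cancel_of_le hrc
  rw [this]
  refine AnalyticSet.iInter fun m => AnalyticSet.iUnion fun r => ?_
  by_cases hrc : ENNReal.ofReal (r:ℝ) ≤ c + ((m:ℝ≥0∞)+1)⁻¹
  · simp only [hrc, iUnion_true]
    exact AnalyticSet.inter' (hf _) (hg _)
  · simp only [hrc, iUnion_false]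
    exact analyticSet_empty

lemma IsLSA.finsetSum {ι : Type*} {f : ι → X → ℝ≥0∞} (s : Finset ι)
    (hf : ∀ i ∈ s, IsLSA (f i)) : IsLSA (fun x => ∑ i ∈ s, f i x) := by
  classical
  induction s using Finset.induction_on with
  | empty => simpa using isLSA_const
  | insert i s' hnotmem ih =>
    have h1 : IsLSA (fun x => f i x + ∑ j ∈ s', f j x) :=
      (hf i (Finset.mem_insert_self i s')).add
        (ih fun j hj => hf j (Finset.mem_insert_of_mem hj))
    intro c
    have : {x : X | (∑ j ∈ insert i s', f j x) ≤ c}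
        = {x | f i x + ∑ j ∈ s', f j x ≤ c} := by
      ext x; simp [Finset.sum_insert hnotmem]
    rw [this]
    exact h1 c

lemma IsUSA.one_sub {f : X → ℝ≥0∞} (hf : IsUSA f) : IsLSA (fun x => 1 - f x) := by
  intro c
  have : {x : X | 1 - f x ≤ c} = {x | 1 - c ≤ f x} := by
    ext x
    simp only [mem_setOf_eq]
    rw [tsub_le_iff_right, tsub_le_iff_right]
    exact ⟨fun h => h.trans (by rw [add_comm]), fun h => h.trans (by rw [add_comm])⟩
  rw [this]
  exact hf _

/-- the key comparison set between an LSA and a USA function is analytic. -/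
lemma analyticSet_le_of_lsa_usa {f g : X → ℝ≥0∞} (hf : IsLSA f) (hg : IsUSA g) :
    AnalyticSet {x | f x ≤ g x} := by
  have : {x : X | f x ≤ g x} = {x | ∞ ≤ g x} ∪ ⋂ m : ℕ, ⋃ r : ℚ,
      ({x | f x ≤ ENNReal.ofReal r + ((m:ℝ≥0∞)+1)⁻¹} ∩ {x | ENNReal.ofReal r ≤ g x}) := by
    ext x
    simp only [mem_setOf_eq, mem_union, mem_iInter, mem_iUnion, mem_inter_iff]
    constructor
    · intro hx
      rcases eq_or_ne (g x) ∞ with hgx | hgx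
      · exact Or.inl (le_of_eq hgx.symm)
      refine Or.inr fun m => ?_
      obtain ⟨r, hr1, hr2⟩ := exists_rat_below hgx m
      exact ⟨r, hx.trans hr2, hr1⟩
    · rintro (hx | hx)
      · exact le_trans le_top hx
      refine le_of_forall_le_add_inv fun m => ?_
      obtain ⟨r, hr1, hr2⟩ := hx m
      exact hr1.trans (by gcongr)
  rw [this]
  exact AnalyticSet.union' (hg ∞)
    (AnalyticSet.iInter fun m => AnalyticSet.iUnion fun r =>
      AnalyticSet.inter' (hf _) (hg _))

end Classes


lemma le_of_forall_le_add_inv' {a b : ℝ≥0∞} (h : ∀ m : ℕ, a ≤ b + ((m:ℝ≥0∞)+1)⁻¹) : a ≤ b := by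
  refine ENNReal.le_of_forall_pos_le_add fun ε hε _ => ?_
  obtain ⟨m, hm⟩ := ENNReal.exists_inv_nat_lt (ENNReal.coe_ne_zero.2 hε.ne')
  refine (h m).trans (add_le_add_right ?_ _)
  refine le_trans ?_ hm.le
  exact ENNReal.inv_le_inv.2 (by simp)

/-- scale `1/2^n`. -/
noncomputable def eps (n : ℕ) : ℝ≥0∞ := ((2:ℝ≥0∞)^n)⁻¹

lemma two_pow_ne_zero (n : ℕ) : ((2:ℝ≥0∞))^n ≠ 0 := pow_ne_zero n two_ne_zero
lemma two_pow_ne_top (n : ℕ) : ((2:ℝ≥0∞))^n ≠ ∞ := by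
  exact ENNReal.pow_ne_top (by simp)
lemma eps_ne_zero (n : ℕ) : eps n ≠ 0 := by
  simp [eps, ENNReal.inv_ne_zero, two_pow_ne_top]
lemma eps_ne_top (n : ℕ) : eps n ≠ ∞ := by
  simp [eps, ENNReal.inv_ne_top, two_pow_ne_zero]

lemma four_pow_mul_eps (n : ℕ) : ((4:ℝ≥0∞))^n * eps n = 2^n := by
  have : ((4:ℝ≥0∞))^n = 2^n * 2^n := by
    rw [← mul_pow]; norm_num
  rw [this, eps, mul_assoc, ENNReal.mul_inv_cancel (two_pow_ne_zero n) (two_pow_ne_top n), mul_one]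

lemma eq_top_of_forall_nat_le {a : ℝ≥0∞} (h : ∀ K : ℕ, (K:ℝ≥0∞) ≤ a) : a = ∞ := by
  by_contra ha
  obtain ⟨K, hK⟩ := ENNReal.exists_nat_gt ha
  exact absurd (h K) (not_le.2 hK)

lemma nat_cast_le_two_pow (K : ℕ) : (K:ℝ≥0∞) ≤ 2^K := by
  have := (Nat.lt_two_pow_self (n := K)).le
  exact_mod_cast (by exact_mod_cast this : ((K:ℕ):ℝ≥0∞) ≤ ((2^K : ℕ) : ℝ≥0∞))

lemma iSup_min_two_pow (c : ℝ≥0∞) : (⨆ m : ℕ, min c ((2:ℝ≥0∞)^m)) = c := by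
  refine le_antisymm (iSup_le fun m => min_le_left _ _) ?_
  rcases eq_or_ne c ∞ with rfl | hc
  · rw [top_le_iff]
    refine eq_top_of_forall_nat_le fun K => ?_
    refine le_iSup_of_le K ?_
    rw [min_eq_right (le_top)]
    exact nat_cast_le_two_pow K
  · obtain ⟨K, hK⟩ := ENNReal.exists_nat_gt hc
    refine le_iSup_of_le K ?_
    rw [min_eq_left (hK.le.trans (nat_cast_le_two_pow K))]

section LayerCake
variable {Ω : Type*} [MeasurableSpace Ω]

lemma lintegral_eq_iSup_layer_meas (μ : Measure Ω) [IsProbabilityMeasure μ]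
    {g : Ω → ℝ≥0∞} (hg : Measurable g) :
    ∫⁻ ω, g ω ∂μ
      = ⨆ n : ℕ, eps n * ∑ k ∈ Finset.Icc (1:ℕ) (4^n), μ {ω | (k : ℝ≥0∞) * eps n < g ω} := by
  classical
  set φ : ℕ → Ω → ℝ≥0∞ := fun n ω => eps n *
    ∑ k ∈ Finset.Icc (1:ℕ) (4^n), ({ω | (k:ℝ≥0∞) * eps n < g ω}.indicator (fun _ => (1:ℝ≥0∞)) ω)
    with hφ
  have hφmeas : ∀ n, Measurable (φ n) := by
    intro n
    refine Measurable.const_mul ?_ _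
    refine Finset.measurable_sum _ fun k _ => ?_
    exact (measurable_const).indicator (hg measurableSet_Ioi)
  have hIs : ∀ n, ∫⁻ ω, φ n ω ∂μ
      = eps n * ∑ k ∈ Finset.Icc (1:ℕ) (4^n), μ {ω | (k : ℝ≥0∞) * eps n < g ω} := by
    intro n
    rw [hφ]
    simp only
    rw [lintegral_const_mul' _ _ (eps_ne_top n)]
    congr 1
    rw [lintegral_finset_sum _ (fun (k : ℕ) _ => (measurable_const).indicator
      (show MeasurableSet {ω | (k:ℝ≥0∞) * eps n < g ω} from hg measurableSet_Ioi))]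
    refine Finset.sum_congr rfl fun k _ => ?_
    exact lintegral_indicator_one (show MeasurableSet {ω | (k:ℝ≥0∞) * eps n < g ω}
      from hg measurableSet_Ioi)
  have hcard : ∀ n ω, φ n ω = eps n *
      ((Finset.Icc (1:ℕ) (4^n)).filter (fun k : ℕ => (k:ℝ≥0∞) * eps n < g ω)).card := by
    intro n ω
    rw [hφ]
    simp only
    congr 1
    have hrw : ∀ k : ℕ, ({ω | (k:ℝ≥0∞) * eps n < g ω}.indicator (fun _ => (1:ℝ≥0∞)) ω)
        = if (k:ℝ≥0∞) * eps n < g ω then (1:ℝ≥0∞) else 0 := fun k => Set.indicator_apply _ _ _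
    classical
    rw [Finset.sum_congr rfl fun k _ => hrw k, Finset.sum_boole]
  have hφ_le : ∀ n ω, φ n ω ≤ g ω := by
    intro n ω
    rw [hcard]
    set S := (Finset.Icc (1:ℕ) (4^n)).filter (fun k : ℕ => (k:ℝ≥0∞) * eps n < g ω) with hS
    rcases S.eq_empty_or_nonempty with hSe | hSne
    · simp [hSe]
    · set m := S.max' hSne with hm
      have hmS : m ∈ S := S.max'_mem hSne
      have hmlt : (m:ℝ≥0∞) * eps n < g ω := (Finset.mem_filter.1 hmS).2
      have hcardle : S.card ≤ m := by
        have hsub : S ⊆ Finset.Icc (1:ℕ) m := by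
          intro k hk
          refine Finset.mem_Icc.2 ⟨(Finset.mem_Icc.1 (Finset.mem_filter.1 hk).1).1, ?_⟩
          exact S.le_max' k hk
        calc S.card ≤ (Finset.Icc (1:ℕ) m).card := Finset.card_le_card hsub
          _ = m := by rw [Nat.card_Icc]; omega
      calc eps n * (S.card : ℝ≥0∞) ≤ eps n * (m:ℝ≥0∞) := by
            refine mul_le_mul_right ?_ _
            exact_mod_cast hcardle
        _ = (m:ℝ≥0∞) * eps n := mul_comm _ _
        _ ≤ g ω := hmlt.le
  have hmin : ∀ n ω, min (g ω) ((2:ℝ≥0∞)^n) ≤ φ n ω + eps n := by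
    intro n ω
    rcases lt_or_ge ((2:ℝ≥0∞)^n) (g ω) with hg2 | hg2
    · refine le_trans (min_le_right _ _) ?_
      have hfil : (Finset.Icc (1:ℕ) (4^n)).filter (fun k : ℕ => (k:ℝ≥0∞) * eps n < g ω)
          = Finset.Icc (1:ℕ) (4^n) := by
        refine Finset.filter_true_of_mem fun k hk => ?_
        refine lt_of_le_of_lt ?_ hg2
        have hk4 : (k:ℝ≥0∞) ≤ ((4:ℝ≥0∞))^n := by
          have := (Finset.mem_Icc.1 hk).2
          exact_mod_cast (by exact_mod_cast this : ((k:ℕ):ℝ≥0∞) ≤ ((4^n : ℕ):ℝ≥0∞))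
        calc (k:ℝ≥0∞) * eps n ≤ (4:ℝ≥0∞)^n * eps n := by gcongr
          _ = 2^n := four_pow_mul_eps n
      rw [hcard, hfil]
      have : ((Finset.Icc (1:ℕ) (4^n)).card : ℝ≥0∞) = ((4:ℝ≥0∞))^n := by
        rw [Nat.card_Icc]
        push_cast
        norm_num
      rw [this, mul_comm, four_pow_mul_eps n]
      exact le_add_right le_rfl
    · refine le_trans (min_le_left _ _) ?_
      by_contra hcon
      push_neg at hcon
      rw [hcard] at hcon
      set C := ((Finset.Icc (1:ℕ) (4^n)).filter (fun k : ℕ => (k:ℝ≥0∞) * eps n < g ω)).card with hC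
      have hcon' : ((C:ℝ≥0∞) + 1) * eps n < g ω := by
        rw [add_mul, one_mul, mul_comm]
        exact hcon
      have hC4 : C + 1 ≤ 4^n := by
        have h1 : ((C:ℝ≥0∞) + 1) * eps n < ((4:ℝ≥0∞))^n * eps n := by
          rw [four_pow_mul_eps n]
          exact lt_of_lt_of_le hcon' hg2
        have h2 : ((C:ℝ≥0∞) + 1) < ((4:ℝ≥0∞))^n :=
          lt_of_mul_lt_mul_right h1 zero_le
        have h3 : (((C+1:ℕ)):ℝ≥0∞) < (((4^n:ℕ)):ℝ≥0∞) := by push_cast; push_cast at h2; exact h2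
        exact_mod_cast h3.le
      have hsub : Finset.Icc (1:ℕ) (C+1) ⊆
          (Finset.Icc (1:ℕ) (4^n)).filter (fun k : ℕ => (k:ℝ≥0∞) * eps n < g ω) := by
        intro k hk
        obtain ⟨hk1, hk2⟩ := Finset.mem_Icc.1 hk
        refine Finset.mem_filter.2 ⟨Finset.mem_Icc.2 ⟨hk1, hk2.trans hC4⟩, ?_⟩
        refine lt_of_le_of_lt ?_ hcon'
        gcongr
        exact_mod_cast hk2
      have := Finset.card_le_card hsub
      rw [Nat.card_Icc, ← hC] at this
      omega
  refine le_antisymm ?_ ?_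
  · have hrw : ∫⁻ ω, g ω ∂μ = ⨆ m : ℕ, ∫⁻ ω, min (g ω) ((2:ℝ≥0∞)^m) ∂μ := by
      rw [← lintegral_iSup (fun m => hg.min measurable_const)
        (fun i j hij ω => min_le_min le_rfl (pow_le_pow_right₀ one_le_two hij))]
      congr 1
      ext ω
      rw [iSup_min_two_pow]
    rw [hrw]
    refine iSup_le fun m => ?_
    refine le_of_forall_le_add_inv' fun j => ?_
    set n := max m j with hn
    have h1 : ∫⁻ ω, min (g ω) ((2:ℝ≥0∞)^m) ∂μ ≤ ∫⁻ ω, φ n ω ∂μ + eps n := by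
      have hpt : ∀ ω, min (g ω) ((2:ℝ≥0∞)^m) ≤ φ n ω + eps n := by
        intro ω
        refine le_trans (min_le_min le_rfl (pow_le_pow_right₀ one_le_two (le_max_left m j))) ?_
        exact hmin n ω
      calc ∫⁻ ω, min (g ω) ((2:ℝ≥0∞)^m) ∂μ ≤ ∫⁻ ω, (φ n ω + eps n) ∂μ := lintegral_mono hpt
        _ = ∫⁻ ω, φ n ω ∂μ + eps n := by
            rw [lintegral_add_right _ measurable_const, lintegral_const, measure_univ, mul_one]
    refine h1.trans ?_
    have h2 : ∫⁻ ω, φ n ω ∂μ ≤ ⨆ n' : ℕ, eps n' * ∑ k ∈ Finset.Icc (1:ℕ) (4^n'),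
        μ {ω | (k : ℝ≥0∞) * eps n' < g ω} := by
      rw [hIs n]
      exact le_iSup (fun n' => eps n' * ∑ k ∈ Finset.Icc (1:ℕ) (4^n'),
        μ {ω | (k : ℝ≥0∞) * eps n' < g ω}) n
    refine add_le_add h2 ?_
    have : eps n ≤ ((n:ℝ≥0∞)+1)⁻¹ := by
      rw [eps]
      refine ENNReal.inv_le_inv.2 ?_
      calc ((n:ℝ≥0∞)+1) = (((n+1:ℕ)):ℝ≥0∞) := by push_cast; ring
        _ ≤ (((2^n:ℕ)):ℝ≥0∞) := by
            exact_mod_cast Nat.succ_le_of_lt (Nat.lt_two_pow_self (n := n))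
        _ = 2^n := by push_cast; ring
    refine this.trans ?_
    exact ENNReal.inv_le_inv.2 (by exact_mod_cast Nat.succ_le_succ (le_max_right m j))
  · refine iSup_le fun n => ?_
    rw [← hIs n]
    exact lintegral_mono (hφ_le n)

lemma lintegral_eq_iSup_layer (μ : Measure Ω) [IsProbabilityMeasure μ]
    {g : Ω → ℝ≥0∞} (hg : AEMeasurable g μ) :
    ∫⁻ ω, g ω ∂μ
      = ⨆ n : ℕ, eps n * ∑ k ∈ Finset.Icc (1:ℕ) (4^n), μ {ω | (k : ℝ≥0∞) * eps n < g ω} := by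
  obtain ⟨G, hGm, hGae⟩ := hg
  have h1 : ∫⁻ ω, g ω ∂μ = ∫⁻ ω, G ω ∂μ := lintegral_congr_ae hGae
  have h2 : ∀ c : ℝ≥0∞, μ {ω | c < g ω} = μ {ω | c < G ω} := by
    intro c
    refine measure_congr ?_
    rw [Filter.eventuallyEq_set]
    filter_upwards [hGae] with ω hω
    rw [hω]
  rw [h1, lintegral_eq_iSup_layer_meas μ hGm]
  congr 1
  ext n
  congr 1
  exact Finset.sum_congr rfl fun k _ => (h2 _).symm

end LayerCake


lemma coe_max_ereal (s t : ℝ) : ((max s t : ℝ) : EReal) = max (s:EReal) (t:EReal) := by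
  rcases le_total s t with h | h
  · rw [max_eq_right h, max_eq_right (EReal.coe_le_coe_iff.2 h)]
  · rw [max_eq_left h, max_eq_left (EReal.coe_le_coe_iff.2 h)]

lemma abs_mono_nonneg {x y : EReal} (hx : 0 ≤ x) (hxy : x ≤ y) : x.abs ≤ y.abs := by
  induction y using EReal.rec with
  | bot => simp
  | top => simp
  | coe t =>
    induction x using EReal.rec with
    | bot => exact absurd hx (by simp)
    | top => exact absurd hxy (by simp)
    | coe s =>
      rw [EReal.abs_def, EReal.abs_def]
      refine ENNReal.ofReal_le_ofReal ?_
      have hs : (0:ℝ) ≤ s := by exact_mod_cast hx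
      have hst : s ≤ t := by exact_mod_cast hxy
      rw [abs_of_nonneg hs, abs_of_nonneg (hs.trans hst)]
      exact hst

lemma monotone_ePos : Monotone ePos := by
  intro a b hab
  exact abs_mono_nonneg (le_max_right _ _) (max_le_max hab le_rfl)

lemma measurable_ePos : Measurable ePos := monotone_ePos.measurable

lemma antitone_eNeg : Antitone eNeg := by
  intro a b hab
  exact abs_mono_nonneg (le_max_right _ _) (max_le_max (EReal.neg_le_neg_iff.2 hab) le_rfl)

lemma measurable_eNeg : Measurable eNeg := antitone_eNeg.measurable

lemma lt_ePos_iff {t : ℝ≥0∞} (ht0 : t ≠ 0) (httop : t ≠ ∞) (a : EReal) :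
    t < ePos a ↔ (t.toReal : EReal) < a := by
  induction a using EReal.rec with
  | bot =>
    have : ePos ⊥ = 0 := by
      rw [ePos, max_eq_right bot_le, ← EReal.coe_zero, EReal.abs_def]
      simp
    rw [this]
    simp [pos_iff_ne_zero, ht0]
  | top =>
    rw [ePos, max_eq_left le_top]
    simp only [EReal.abs_top]
    constructor
    · intro _; exact EReal.coe_lt_top _
    · intro _; exact lt_top_iff_ne_top.2 httop
  | coe s =>
    rw [ePos, show (0:EReal) = ((0:ℝ):EReal) from rfl, ← coe_max_ereal, EReal.abs_def,
      abs_of_nonneg (le_max_right s 0)]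
    rw [ENNReal.lt_ofReal_iff_toReal_lt httop]
    have htpos : 0 < t.toReal := ENNReal.toReal_pos ht0 httop
    constructor
    · intro h
      rcases lt_max_iff.1 h with h | h
      · exact_mod_cast h
      · exact absurd h (not_lt.2 htpos.le)
    · intro h
      exact lt_max_iff.2 (Or.inl (by exact_mod_cast h))

lemma lt_eNeg_iff {t : ℝ≥0∞} (ht0 : t ≠ 0) (httop : t ≠ ∞) (a : EReal) :
    t < eNeg a ↔ a < ((-t.toReal : ℝ) : EReal) := by
  have h1 : eNeg a = ePos (-a) := rfl
  rw [h1, lt_ePos_iff ht0 httop, EReal.coe_neg]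
  exact EReal.lt_neg_comm

section AEM
variable {Y : Type} [TopologicalSpace Y] [PolishSpace Y] [MeasurableSpace Y] [BorelSpace Y]

lemma aemeasurable_of_analytic_levels (μ : Measure Y) [IsFiniteMeasure μ] {u : Y → EReal}
    (hu : ∀ t : ℝ, AnalyticSet {y | u y ≤ (t:EReal)}) : AEMeasurable u μ := by
  have hnm : ∀ t : ℝ, NullMeasurableSet {y | u y ≤ (t:EReal)} μ :=
    fun t => analytic_nullMeasurableSet (hu t) μ
  have hNM : NullMeasurable u μ := by
    refine measurable_of_Iic fun t => ?_
    induction t using EReal.rec with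
    | bot =>
      have hset : u ⁻¹' (Iic ⊥) = ⋂ j : ℕ, {y | u y ≤ ((-(j:ℝ) : ℝ) : EReal)} := by
        ext y
        simp only [mem_preimage, mem_Iic, mem_iInter, mem_setOf_eq, le_bot_iff]
        constructor
        · intro h j
          rw [h]
          exact bot_le
        · intro hy
          revert hy
          induction u y using EReal.rec with
          | bot => intro _; rfl
          | top =>
            intro hy
            exact absurd (hy 0) (by simp)
          | coe s =>
            intro hy
            exfalso
            obtain ⟨j, hj⟩ := exists_nat_gt (-s)
            have hle : s ≤ -(j:ℝ) := by exact_mod_cast hy j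
            linarith
      exact hset ▸ NullMeasurableSet.iInter fun j => hnm _
    | coe t => exact hnm t
    | top =>
      have hset : u ⁻¹' (Iic ⊤) = univ := by
        ext y; simp
      exact hset ▸ MeasurableSet.univ.nullMeasurableSet
  exact hNM.aemeasurable

end AEM

/-- Translation of the `EReal` inequality defining `Iminus ≤ a` into `ℝ≥0∞` arithmetic. -/
lemma ereal_sub_le_coe_iff (P N : ℝ≥0∞) (a : ℝ) :
    ((P:EReal) - (N:EReal) ≤ (a:EReal))
      ↔ (N = ∞ ∨ P + ENNReal.ofReal (-a) ≤ N + ENNReal.ofReal a) := by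
  rcases eq_or_ne N ∞ with rfl | hN
  · simp only [EReal.coe_ennreal_top, true_or, iff_true]
    rw [sub_eq_add_neg, EReal.neg_top, EReal.add_bot]
    exact bot_le
  rcases eq_or_ne P ∞ with rfl | hP
  · constructor
    · intro h
      exfalso
      rw [EReal.coe_ennreal_top, sub_eq_add_neg] at h
      have hNb : -(N : EReal) ≠ ⊥ := by
        simp only [ne_eq, EReal.neg_eq_bot_iff]
        exact fun hc => hN (EReal.coe_ennreal_eq_top_iff.1 hc)
      rw [EReal.top_add_of_ne_bot hNb] at h
      exact absurd h (by simp)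
    · rintro (h | h)
      · exact absurd h hN
      · exfalso
        have : (∞ : ℝ≥0∞) ≤ N + ENNReal.ofReal a := le_trans (le_add_right le_rfl) h
        rw [top_le_iff] at this
        exact absurd this (by
          simp only [ne_eq, ENNReal.add_eq_top, not_or]
          exact ⟨hN, ENNReal.ofReal_ne_top⟩)
  · have hPc : ((P : EReal)) = ((P.toReal : ℝ) : EReal) := by
      rw [← EReal.toReal_coe_ennreal]
      exact (EReal.coe_toReal (fun hc => hP (EReal.coe_ennreal_eq_top_iff.1 hc))
        (EReal.coe_ennreal_ne_bot _)).symm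
    have hNc : ((N : EReal)) = ((N.toReal : ℝ) : EReal) := by
      rw [← EReal.toReal_coe_ennreal]
      exact (EReal.coe_toReal (fun hc => hN (EReal.coe_ennreal_eq_top_iff.1 hc))
        (EReal.coe_ennreal_ne_bot _)).symm
    rw [hPc, hNc, ← EReal.coe_sub, EReal.coe_le_coe_iff]
    set p := P.toReal with hp
    set n := N.toReal with hn
    have hp0 : 0 ≤ p := ENNReal.toReal_nonneg
    have hn0 : 0 ≤ n := ENNReal.toReal_nonneg
    have hPof : P = ENNReal.ofReal p := by rw [hp, ENNReal.ofReal_toReal hP]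
    have hNof : N = ENNReal.ofReal n := by rw [hn, ENNReal.ofReal_toReal hN]
    rw [hPof, hNof]
    have hofm : ENNReal.ofReal (-a) = ENNReal.ofReal (max (-a) 0) := by
      rcases le_total (-a) 0 with h | h
      · rw [ENNReal.ofReal_of_nonpos h, max_eq_right h, ENNReal.ofReal_zero]
      · rw [max_eq_left h]
    have hofp : ENNReal.ofReal a = ENNReal.ofReal (max a 0) := by
      rcases le_total a 0 with h | h
      · rw [ENNReal.ofReal_of_nonpos h, max_eq_right h, ENNReal.ofReal_zero]
      · rw [max_eq_left h]
    rw [hofm, hofp, ← ENNReal.ofReal_add hp0 (le_max_right _ _),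
      ← ENNReal.ofReal_add hn0 (le_max_right _ _),
      ENNReal.ofReal_le_ofReal_iff (by positivity)]
    have hmax : max a 0 - max (-a) 0 = a := max_zero_sub_max_neg_zero_eq_self a
    constructor
    · intro h
      exact Or.inr (by linarith)
    · rintro (h | h)
      · exact absurd h ENNReal.ofReal_ne_top
      · linarith

end LSA

open Set Filter Topology in
/-- Let `X`, `Y` be Polish spaces with their Borel σ-algebras, `q` a Markov
kernel from `X` to `Y` and `f : X × Y → EReal` lower semianalytic. Then
`λ x := I_{q x}(f(x, ·))` is lower semianalytic. -/
theorem lowerSemianalytic_Iminus_kernel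
    {X Y : Type} [TopologicalSpace X] [PolishSpace X] [MeasurableSpace X] [BorelSpace X]
    [TopologicalSpace Y] [PolishSpace Y] [MeasurableSpace Y] [BorelSpace Y]
    (q : Kernel X Y) [IsMarkovKernel q]
    (f : X × Y → EReal)
    (hf : ∀ a : ℝ, MeasureTheory.AnalyticSet {z : X × Y | f z ≤ (a : EReal)}) :
    ∀ a : ℝ, MeasureTheory.AnalyticSet
      {x : X | Iminus (q x) (fun y => f (x, y)) ≤ (a : EReal)} := by
  intro a
  classical
  -- analytic strict sublevel sets
  have hG : ∀ t : ℝ, AnalyticSet {z : X × Y | f z < (t:EReal)} := by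
    intro t
    have hset : {z : X × Y | f z < (t:EReal)}
        = ⋃ j : ℕ, {z : X × Y | f z ≤ ((t - ((j:ℝ)+1)⁻¹ : ℝ) : EReal)} := by
      ext z
      simp only [mem_setOf_eq, mem_iUnion]
      constructor
      · intro hz
        revert hz
        induction f z using EReal.rec with
        | bot => intro _; exact ⟨0, bot_le⟩
        | top => intro hz; exact absurd hz (by simp)
        | coe s =>
          intro hz
          have hs : s < t := by exact_mod_cast hz
          obtain ⟨j, hj⟩ := exists_nat_one_div_lt (sub_pos.2 hs)
          refine ⟨j, ?_⟩
          have hle : s ≤ t - ((j:ℝ)+1)⁻¹ := by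
            rw [one_div] at hj
            linarith
          exact_mod_cast hle
      · rintro ⟨j, hj⟩
        refine lt_of_le_of_lt hj ?_
        have : t - ((j:ℝ)+1)⁻¹ < t := by
          have : (0:ℝ) < ((j:ℝ)+1)⁻¹ := by positivity
          linarith
        exact_mod_cast this
    rw [hset]
    exact AnalyticSet.iUnion fun j => hf _
  -- upper-semianalytic kernel masses
  have hm : ∀ t : ℝ, LSA.IsUSA (fun x => q x (Prod.mk x ⁻¹' {z : X × Y | f z ≤ (t:EReal)})) :=
    fun t => LSA.kernel_analytic_usa (hf t) q
  have hl : ∀ t : ℝ, LSA.IsUSA (fun x => q x (Prod.mk x ⁻¹' {z : X × Y | f z < (t:EReal)})) :=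
    fun t => LSA.kernel_analytic_usa (hG t) q
  -- null-measurability of sections
  have hsecanal : ∀ (x : X) (t : ℝ),
      AnalyticSet (Prod.mk x ⁻¹' {z : X × Y | f z ≤ (t:EReal)}) :=
    fun x t => (hf t).preimage (Continuous.prodMk_right x)
  have hsecnm : ∀ (x : X) (t : ℝ),
      NullMeasurableSet (Prod.mk x ⁻¹' {z : X × Y | f z ≤ (t:EReal)}) (q x) :=
    fun x t => LSA.analytic_nullMeasurableSet (hsecanal x t) (q x)
  -- a.e.-measurability of sections
  have hsec : ∀ x : X, AEMeasurable (fun y => f (x, y)) (q x) := by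
    intro x
    refine LSA.aemeasurable_of_analytic_levels (q x) fun t => ?_
    exact hsecanal x t
  set P : X → ℝ≥0∞ := fun x => ∫⁻ y, ePos (f (x, y)) ∂(q x) with hP
  set N : X → ℝ≥0∞ := fun x => ∫⁻ y, eNeg (f (x, y)) ∂(q x) with hN
  -- pointwise layer-cake formulas
  have hPx : ∀ x, P x = ⨆ n : ℕ, LSA.eps n * ∑ k ∈ Finset.Icc (1:ℕ) (4^n),
      (1 - q x (Prod.mk x ⁻¹'
        {z : X × Y | f z ≤ ((((k:ℝ≥0∞) * LSA.eps n).toReal : ℝ) : EReal)})) := by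
    intro x
    rw [hP]
    simp only
    rw [LSA.lintegral_eq_iSup_layer (q x) (g := fun y => ePos (f (x, y)))
      (LSA.measurable_ePos.comp_aemeasurable (hsec x))]
    congr 1
    ext n
    congr 1
    refine Finset.sum_congr rfl fun k hk => ?_
    have hk1 : (1:ℕ) ≤ k := (Finset.mem_Icc.1 hk).1
    have hkne : ((k:ℝ≥0∞)) ≠ 0 := by
      simp only [ne_eq, Nat.cast_eq_zero]
      omega
    have ht0 : (k:ℝ≥0∞) * LSA.eps n ≠ 0 := mul_ne_zero hkne (LSA.eps_ne_zero n)
    have httop : (k:ℝ≥0∞) * LSA.eps n ≠ ∞ :=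
      ENNReal.mul_ne_top (by simp) (LSA.eps_ne_top n)
    have hset : {y | (k:ℝ≥0∞) * LSA.eps n < ePos (f (x, y))}
        = (Prod.mk x ⁻¹'
          {z : X × Y | f z ≤ ((((k:ℝ≥0∞) * LSA.eps n).toReal : ℝ) : EReal)})ᶜ := by
      ext y
      rw [mem_setOf_eq, LSA.lt_ePos_iff ht0 httop]
      simp only [mem_compl_iff, mem_preimage, mem_setOf_eq, not_le]
    rw [hset, measure_compl₀ (hsecnm x _) (measure_ne_top _ _), measure_univ]
  have hNx : ∀ x, N x = ⨆ n : ℕ, LSA.eps n * ∑ k ∈ Finset.Icc (1:ℕ) (4^n),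
      q x (Prod.mk x ⁻¹'
        {z : X × Y | f z < ((-(((k:ℝ≥0∞) * LSA.eps n).toReal) : ℝ) : EReal)}) := by
    intro x
    rw [hN]
    simp only
    rw [LSA.lintegral_eq_iSup_layer (q x) (g := fun y => eNeg (f (x, y)))
      (LSA.measurable_eNeg.comp_aemeasurable (hsec x))]
    congr 1
    ext n
    congr 1
    refine Finset.sum_congr rfl fun k hk => ?_
    have hk1 : (1:ℕ) ≤ k := (Finset.mem_Icc.1 hk).1
    have hkne : ((k:ℝ≥0∞)) ≠ 0 := by
      simp only [ne_eq, Nat.cast_eq_zero]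
      omega
    have ht0 : (k:ℝ≥0∞) * LSA.eps n ≠ 0 := mul_ne_zero hkne (LSA.eps_ne_zero n)
    have httop : (k:ℝ≥0∞) * LSA.eps n ≠ ∞ :=
      ENNReal.mul_ne_top (by simp) (LSA.eps_ne_top n)
    congr 1
    ext y
    rw [mem_setOf_eq, LSA.lt_eNeg_iff ht0 httop]
    simp only [mem_preimage, mem_setOf_eq]
  -- semianalyticity of P and N
  have hPlsa : LSA.IsLSA P := by
    have hPeq : P = fun x => ⨆ n : ℕ, LSA.eps n * ∑ k ∈ Finset.Icc (1:ℕ) (4^n),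
        (1 - q x (Prod.mk x ⁻¹'
          {z : X × Y | f z ≤ ((((k:ℝ≥0∞) * LSA.eps n).toReal : ℝ) : EReal)})) := funext hPx
    rw [hPeq]
    refine LSA.IsLSA.iSup fun n => ?_
    refine LSA.IsLSA.const_mul ?_ (LSA.eps_ne_zero n) (LSA.eps_ne_top n)
    refine LSA.IsLSA.finsetSum _ fun k _ => ?_
    exact LSA.IsUSA.one_sub (hm _)
  have hNusa : LSA.IsUSA N := by
    have hNeq : N = fun x => ⨆ n : ℕ, LSA.eps n * ∑ k ∈ Finset.Icc (1:ℕ) (4^n),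
        q x (Prod.mk x ⁻¹'
          {z : X × Y | f z < ((-(((k:ℝ≥0∞) * LSA.eps n).toReal) : ℝ) : EReal)}) := funext hNx
    rw [hNeq]
    refine LSA.IsUSA.iSup fun n => ?_
    refine LSA.IsUSA.const_mul ?_ (LSA.eps_ne_zero n) (LSA.eps_ne_top n)
    exact LSA.IsUSA.finsetSum _ fun k _ => hl _
  -- final reduction
  have key : {x : X | Iminus (q x) (fun y => f (x, y)) ≤ (a:EReal)}
      = {x | (∞:ℝ≥0∞) ≤ N x}
        ∪ {x | P x + ENNReal.ofReal (-a) ≤ N x + ENNReal.ofReal a} := by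
    ext x
    rw [mem_union, mem_setOf_eq, mem_setOf_eq, mem_setOf_eq]
    have hIm : Iminus (q x) (fun y => f (x, y)) = ((P x : EReal)) - ((N x : EReal)) := rfl
    rw [hIm, LSA.ereal_sub_le_coe_iff, top_le_iff]
  rw [key]
  refine LSA.AnalyticSet.union' (hNusa ∞) ?_
  exact LSA.analyticSet_le_of_lsa_usa (hPlsa.add LSA.isLSA_const) (hNusa.add LSA.isUSA_const)
end

section
/- Let (Ω, 𝒢) be a measurable space, p* a probability measure on Ω, Y : Ω → ℝ^d a measurable map, and V : Ω × ℝ → EReal jointly measurable with V(ω, ·) nondecreasing for every ω. Let γ ∈ (0,1] and let C : Ω → [0,∞] be measurable with c* := ∫⁻ C dp* < ∞, and assume that for every ω with C(ω) < ∞, every λ ≥ 1 and every x ∈ ℝ one has V(ω, λ·x) ≤ λ^γ·(V(ω,x) + C(ω)) in EReal. Let α* ∈ (0,1], let h ∈ ℝ^d with h ≠ 0 satisfy p*({ω : ⟨h, Y(ω)⟩ < −α*·|h|}) ≥ α*, and let n₀ ≥ 1 be an integer with p*({ω : V(ω, −n₀) ≤ −(1 + 2c*/α*)}) ≥ 1 −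 α*/2. Then for every x ≤ −n₀: ∫⁻ (V(ω, x + ⟨h, Y(ω)⟩))⁻ dp*(ω) ≥ (|x|/n₀)^γ · α*/2. -/
open MeasureTheory Set
open scoped ENNReal

lemma ereal_abs_le_abs : ∀ {x y : EReal}, 0 ≤ x → x ≤ y → x.abs ≤ y.abs
  | _, ⊥, _, hxy => by simpa using le_antisymm hxy bot_le ▸ le_top
  | _, ⊤, _, _ => le_top
  | ⊥, (r : ℝ), hx, _ => by simp at hx
  | ⊤, (r : ℝ), _, hxy => by simpa using hxy
  | (s : ℝ), (r : ℝ), hx, hxy => by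
      rw [EReal.abs_def, EReal.abs_def]
      have hs : (0 : ℝ) ≤ s := by exact_mod_cast hx
      have hsr : s ≤ r := by exact_mod_cast hxy
      exact ENNReal.ofReal_le_ofReal
        (by rw [abs_of_nonneg hs, abs_of_nonneg (hs.trans hsr)]; exact hsr)

lemma ofReal_neg_le_eNeg {a : EReal} {r : ℝ} (ha : a ≤ (r : EReal)) :
    ENNReal.ofReal (-r) ≤ eNeg a := by
  rcases le_or_gt (-r) 0 with h0 | h0
  · simp [ENNReal.ofReal_eq_zero.2 h0]
  · have h1 : ((-r : ℝ) : EReal) ≤ max (-a) 0 := by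
      refine le_max_of_le_left ?_
      rw [EReal.coe_neg]
      exact EReal.neg_le_neg_iff.2 ha
    have h2 : (0 : EReal) ≤ ((-r : ℝ) : EReal) := by exact_mod_cast h0.le
    calc ENNReal.ofReal (-r) = ((-r : ℝ) : EReal).abs := by
          rw [EReal.abs_def, abs_of_nonneg h0.le]
      _ ≤ (max (-a) 0).abs := ereal_abs_le_abs h2 h1

/-- Under the one-sided elasticity bound with exponent `γ ∈ (0,1]`, the
quantitative no-arbitrage bound for `h ≠ 0`, and the negativity bound at `−n₀`, for every
`x ≤ −n₀` one has `∫⁻ (V(ω, x + ⟨h, Y ω⟩))⁻ dp* ≥ (|x|/n₀)^γ · α*/2`. -/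
theorem neg_part_lintegral_lower_bound {Ω : Type*} [MeasurableSpace Ω] {d : ℕ}
    (p : Measure Ω) [IsProbabilityMeasure p]
    (Y : Ω → EuclideanSpace ℝ (Fin d)) (hY : Measurable Y)
    (V : Ω → ℝ → EReal) (hVmeas : Measurable (Function.uncurry V))
    (hVmono : ∀ ω, Monotone (V ω))
    (γ : ℝ) (hγ0 : 0 < γ) (hγ1 : γ ≤ 1)
    (C : Ω → ℝ≥0∞) (hCmeas : Measurable C)
    (cstar : ℝ) (hcstar0 : 0 ≤ cstar) (hcstar : (∫⁻ ω, C ω ∂p) = ENNReal.ofReal cstar)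
    (hgrow : ∀ ω, C ω < ⊤ → ∀ lam : ℝ, 1 ≤ lam → ∀ x : ℝ,
      V ω (lam * x) ≤ ((lam ^ γ : ℝ) : EReal) * (V ω x + (C ω : EReal)))
    (αstar : ℝ) (hα0 : 0 < αstar) (hα1 : αstar ≤ 1)
    (h : EuclideanSpace ℝ (Fin d)) (hh : h ≠ 0)
    (hqNA : ENNReal.ofReal αstar ≤ p {ω | (inner ℝ h (Y ω) : ℝ) < -αstar * ‖h‖})
    (n₀ : ℕ) (hn₀ : 1 ≤ n₀)
    (hneg : ENNReal.ofReal (1 - αstar / 2)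
      ≤ p {ω | V ω (-(n₀ : ℝ)) ≤ ((-(1 + 2 * cstar / αstar) : ℝ) : EReal)}) :
    ∀ x : ℝ, x ≤ -(n₀ : ℝ) →
      ENNReal.ofReal ((|x| / n₀) ^ γ * αstar / 2)
        ≤ ∫⁻ ω, eNeg (V ω (x + (inner ℝ h (Y ω) : ℝ))) ∂p := by
  intro x hx
  set K : ℝ := 1 + 2 * cstar / αstar with hKdef
  have hn₀pos : (0 : ℝ) < n₀ := by exact_mod_cast hn₀
  set lam : ℝ := |x| / n₀ with hlamdef
  have hxneg : x ≤ 0 := hx.trans (by linarith)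
  have habs : |x| = -x := abs_of_nonpos hxneg
  have hlam1 : 1 ≤ lam := by
    rw [hlamdef, le_div_iff₀ hn₀pos, one_mul, habs]; linarith
  have hlamx : lam * (-(n₀ : ℝ)) = x := by
    rw [hlamdef, habs, mul_neg, div_mul_cancel₀ _ hn₀pos.ne', neg_neg]
  have hlamγ : (0 : ℝ) ≤ lam ^ γ := Real.rpow_nonneg (by linarith) γ
  have hK0 : 0 < K := by
    have : 0 ≤ 2 * cstar / αstar := by positivity
    rw [hKdef]; linarith
  -- the three relevant sets
  set A : Set Ω := {ω | (inner ℝ h (Y ω) : ℝ) < -αstar * ‖h‖} with hAdef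
  set B : Set Ω := {ω | V ω (-(n₀ : ℝ)) ≤ ((-K : ℝ) : EReal)} with hBdef
  set S : Set Ω := A ∩ B ∩ {ω | C ω < ⊤} with hSdef
  have hinner : Measurable fun ω => (inner ℝ h (Y ω) : ℝ) :=
    (Continuous.inner continuous_const continuous_id).measurable.comp hY
  have hAmeas : MeasurableSet A := measurableSet_lt hinner measurable_const
  have hVn₀ : Measurable fun ω => V ω (-(n₀ : ℝ)) :=
    hVmeas.comp (measurable_id.prodMk measurable_const)
  have hBmeas : MeasurableSet B := hVn₀ measurableSet_Iic
  have hSmeas : MeasurableSet S :=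
    (hAmeas.inter hBmeas).inter (hCmeas measurableSet_Iio)
  have hCtop : p {ω | ¬ C ω < ⊤} = 0 := by
    have : ∀ᵐ ω ∂p, C ω < ⊤ :=
      ae_lt_top hCmeas (by rw [hcstar]; exact ENNReal.ofReal_ne_top)
    exact this
  -- measure of S
  have hpAB : ENNReal.ofReal (αstar / 2) ≤ p (A ∩ B) := by
    have h1 : p A + p B = p (A ∪ B) + p (A ∩ B) := (measure_union_add_inter A hBmeas).symm
    have h2 : p (A ∪ B) ≤ 1 := prob_le_one
    have h3 : ENNReal.ofReal αstar + ENNReal.ofReal (1 - αstar / 2) ≤ p A + p B :=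
      add_le_add hqNA hneg
    have h4 : ENNReal.ofReal αstar + ENNReal.ofReal (1 - αstar / 2)
        = 1 + ENNReal.ofReal (αstar / 2) := by
      rw [← ENNReal.ofReal_add hα0.le (by linarith), ← ENNReal.ofReal_one,
        ← ENNReal.ofReal_add zero_le_one (by linarith)]
      ring_nf
    have h5 : 1 + ENNReal.ofReal (αstar / 2) ≤ 1 + p (A ∩ B) := by
      calc 1 + ENNReal.ofReal (αstar / 2) ≤ p A + p B := h4 ▸ h3
        _ = p (A ∪ B) + p (A ∩ B) := h1
        _ ≤ 1 + p (A ∩ B) := add_le_add h2 le_rfl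
    exact (ENNReal.add_le_add_iff_left ENNReal.one_ne_top).1 h5
  have hpS : ENNReal.ofReal (αstar / 2) ≤ p S := by
    have hsub : A ∩ B ⊆ S ∪ {ω | ¬ C ω < ⊤} := by
      intro ω hω
      by_cases hc : C ω < ⊤
      · exact Or.inl ⟨hω, hc⟩
      · exact Or.inr hc
    calc ENNReal.ofReal (αstar / 2) ≤ p (A ∩ B) := hpAB
      _ ≤ p S + p {ω | ¬ C ω < ⊤} := (measure_mono hsub).trans (measure_union_le _ _)
      _ = p S := by rw [hCtop, add_zero]
  -- pointwise bound on S
  have hpt : ∀ ω ∈ S,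
      ENNReal.ofReal (lam ^ γ) * (ENNReal.ofReal K - C ω)
        ≤ eNeg (V ω (x + (inner ℝ h (Y ω) : ℝ))) := by
    rintro ω ⟨⟨hA, hB⟩, hC⟩
    set c : ℝ := (C ω).toReal with hcdef
    have hc0 : 0 ≤ c := ENNReal.toReal_nonneg
    have hCc : (C ω : EReal) = (c : EReal) := by
      rw [hcdef, ← ENNReal.ofReal_toReal hC.ne, EReal.coe_ennreal_ofReal,
        ENNReal.toReal_ofReal ENNReal.toReal_nonneg]
      exact_mod_cast max_eq_left ENNReal.toReal_nonneg
    have hinner0 : (inner ℝ h (Y ω) : ℝ) < 0 := by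
      have : -αstar * ‖h‖ ≤ 0 := by
        have : (0 : ℝ) ≤ αstar * ‖h‖ := by positivity
        linarith
      exact lt_of_lt_of_le hA this
    have step1 : V ω (x + (inner ℝ h (Y ω) : ℝ)) ≤ V ω x :=
      hVmono ω (by linarith)
    have step2 : V ω x ≤ ((lam ^ γ : ℝ) : EReal) * (V ω (-(n₀ : ℝ)) + (C ω : EReal)) := by
      rw [← hlamx]; exact hgrow ω hC lam hlam1 _
    have step3 : V ω (-(n₀ : ℝ)) + (C ω : EReal) ≤ ((c - K : ℝ) : EReal) := by
      have : ((-K : ℝ) : EReal) + (c : EReal) = ((c - K : ℝ) : EReal) := by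
        rw [← EReal.coe_add]; congr 1; ring
      rw [← this]
      exact add_le_add hB (le_of_eq hCc)
    have step4 : V ω (x + (inner ℝ h (Y ω) : ℝ)) ≤ ((lam ^ γ * (c - K) : ℝ) : EReal) := by
      calc V ω (x + (inner ℝ h (Y ω) : ℝ)) ≤ V ω x := step1
        _ ≤ ((lam ^ γ : ℝ) : EReal) * (V ω (-(n₀ : ℝ)) + (C ω : EReal)) := step2
        _ ≤ ((lam ^ γ : ℝ) : EReal) * ((c - K : ℝ) : EReal) :=
            mul_le_mul_of_nonneg_left step3 (by exact_mod_cast hlamγ)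
        _ = ((lam ^ γ * (c - K) : ℝ) : EReal) := (EReal.coe_mul _ _).symm
    have := ofReal_neg_le_eNeg step4
    calc ENNReal.ofReal (lam ^ γ) * (ENNReal.ofReal K - C ω)
        = ENNReal.ofReal (lam ^ γ) * (ENNReal.ofReal K - ENNReal.ofReal c) := by
          rw [← ENNReal.ofReal_toReal hC.ne]
      _ = ENNReal.ofReal (lam ^ γ) * ENNReal.ofReal (K - c) := by
          rw [ENNReal.ofReal_sub _ hc0]
      _ = ENNReal.ofReal (lam ^ γ * (K - c)) := (ENNReal.ofReal_mul hlamγ).symm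
      _ = ENNReal.ofReal (-(lam ^ γ * (c - K))) := by ring_nf
      _ ≤ eNeg (V ω (x + (inner ℝ h (Y ω) : ℝ))) := this
  -- lower bound for ∫ over S of (K - C)
  have hI : ENNReal.ofReal (αstar / 2) ≤ ∫⁻ ω in S, (ENNReal.ofReal K - C ω) ∂p := by
    set I := ∫⁻ ω in S, (ENNReal.ofReal K - C ω) ∂p with hIdef
    have h1 : ENNReal.ofReal K * p S = ∫⁻ _ in S, ENNReal.ofReal K ∂p :=
      (setLIntegral_const S _).symm
    have h2 : (∫⁻ _ in S, ENNReal.ofReal K ∂p) ≤ I + ∫⁻ ω in S, C ω ∂p := by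
      rw [← lintegral_add_right _ hCmeas]
      exact lintegral_mono fun ω => le_tsub_add
    have h3 : (∫⁻ ω in S, C ω ∂p) ≤ ENNReal.ofReal cstar := by
      rw [← hcstar]; exact setLIntegral_le_lintegral _ _
    have h4 : ENNReal.ofReal (αstar / 2) + ENNReal.ofReal cstar
        ≤ ENNReal.ofReal K * p S := by
      calc ENNReal.ofReal (αstar / 2) + ENNReal.ofReal cstar
          = ENNReal.ofReal (K * (αstar / 2)) := by
            rw [← ENNReal.ofReal_add (by linarith) hcstar0]
            congr 1
            field_simp [hKdef]
            rw [hKdef, mul_add, mul_div_assoc', mul_comm αstar (2 * cstar), mul_div_assoc, div_self hα0.ne']; ring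
        _ = ENNReal.ofReal K * ENNReal.ofReal (αstar / 2) :=
            ENNReal.ofReal_mul hK0.le
        _ ≤ ENNReal.ofReal K * p S := mul_le_mul_right hpS _
    have h5 : ENNReal.ofReal (αstar / 2) + ENNReal.ofReal cstar
        ≤ I + ENNReal.ofReal cstar := by
      calc ENNReal.ofReal (αstar / 2) + ENNReal.ofReal cstar
          ≤ ENNReal.ofReal K * p S := h4
        _ = ∫⁻ _ in S, ENNReal.ofReal K ∂p := h1
        _ ≤ I + ∫⁻ ω in S, C ω ∂p := h2
        _ ≤ I + ENNReal.ofReal cstar := add_le_add le_rfl h3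
    exact (ENNReal.add_le_add_iff_right ENNReal.ofReal_ne_top).1 h5
  -- put everything together
  calc ENNReal.ofReal ((|x| / n₀) ^ γ * αstar / 2)
      = ENNReal.ofReal (lam ^ γ) * ENNReal.ofReal (αstar / 2) := by
        rw [← ENNReal.ofReal_mul hlamγ]
        congr 1
        rw [hlamdef]
        ring
    _ ≤ ENNReal.ofReal (lam ^ γ) * ∫⁻ ω in S, (ENNReal.ofReal K - C ω) ∂p :=
        mul_le_mul_right hI _
    _ = ∫⁻ ω in S, ENNReal.ofReal (lam ^ γ) * (ENNReal.ofReal K - C ω) ∂p :=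
        (lintegral_const_mul' _ _ ENNReal.ofReal_ne_top).symm
    _ ≤ ∫⁻ ω in S, eNeg (V ω (x + (inner ℝ h (Y ω) : ℝ))) ∂p :=
        setLIntegral_mono' hSmeas hpt
    _ ≤ ∫⁻ ω, eNeg (V ω (x + (inner ℝ h (Y ω) : ℝ))) ∂p :=
        setLIntegral_le_lintegral _ _
end
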